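/- arXiv:1302.6230 — 2 statements merged into one kernel-verified Lean document; each statement's English description precedes it below -/
import Mathlib

section
/- For all integers m, n ≥ 1, for every generator v ∈ {s, t_1, …, t_m, u_1, …, u_n} and all elements X, Y of the monoid G⁺_{m,n}, if v·X = v·Y in G⁺_{m,n} then X = Y. -/
namespace Gmn
/-- Generators of `G_{m,n}`: `s`, `t 1, …, t m`, `u 1, …, u n`. -/
inductive Gen (m n : ℕ) : Type
  | s : Gen m n
  | t : Fin m → Gen m n
  | u : Fin n → Gen m n

/-- The word `s · t 1 ⋯ t m`. -/
def wordT (m n : ℕ) : List (Gen m n) := Gen.s :: List.ofFn (fun i => Gen.t i)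

/-- The word `s · u 1 ⋯ u n`. -/
def wordU (m n : ℕ) : List (Gen m n) := Gen.s :: List.ofFn (fun j => Gen.u j)

/-- The word `s · t 1 ⋯ t m · u 1 ⋯ u n`. -/
def wordFull (m n : ℕ) : List (Gen m n) :=
  Gen.s :: (List.ofFn (fun i => Gen.t i) ++ List.ofFn (fun j => Gen.u j))

/-- The defining relations of `G_{m,n}`: all cyclic rotations of `s·t_1⋯t_m` are equal,
all cyclic rotations of `s·u_1⋯u_n` are equal, and `t_i · u_j = u_j · t_i` for all `i, j`. -/
inductive Rel (m n : ℕ) : FreeMonoid (Gen m n) → FreeMonoid (Gen m n) → Prop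
  | rotT (j : ℕ) :
      Rel m n (FreeMonoid.ofList (wordT m n)) (FreeMonoid.ofList ((wordT m n).rotate j))
  | rotU (j : ℕ) :
      Rel m n (FreeMonoid.ofList (wordU m n)) (FreeMonoid.ofList ((wordU m n).rotate j))
  | comm (i : Fin m) (j : Fin n) :
      Rel m n (FreeMonoid.of (Gen.t i) * FreeMonoid.of (Gen.u j))
        (FreeMonoid.of (Gen.u j) * FreeMonoid.of (Gen.t i))

/-- The presented monoid `G⁺_{m,n}`. -/
abbrev GP (m n : ℕ) := PresentedMonoid (Rel m n)

/-- The image of a generator in `G⁺_{m,n}`. -/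
abbrev gen {m n : ℕ} (g : Gen m n) : GP m n := PresentedMonoid.of (Rel m n) g

/-- The element `Δ = s · t_1 ⋯ t_m · u_1 ⋯ u_n` of `G⁺_{m,n}`. -/
def Delta (m n : ℕ) : GP m n :=
  PresentedMonoid.mk (Rel m n) (FreeMonoid.ofList (wordFull m n))

open List

/-! ### A-side: the cyclic monoid on `Fin M` -/

/-- The `k`-th rotation of the full cycle word `0 1 ⋯ (M-1)`. -/
def rot (M : ℕ) (k : ℕ) : List (Fin M) := (List.finRange M).rotate k

@[simp] lemma length_rot (M k : ℕ) : (rot M k).length = M := by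
  simp [rot]

lemma rot_mod (M k : ℕ) : rot M (k % M) = rot M k := by
  unfold rot
  conv_rhs => rw [← List.rotate_mod]
  simp

lemma rot_zero (M : ℕ) : rot M 0 = List.finRange M := by simp [rot]

/-- Rotating a decomposition of a rotation. -/
lemma rot_cycle {M k : ℕ} {X Y : List (Fin M)} (h : rot M k = X ++ Y) :
    Y ++ X = rot M (k + X.length) := by
  have : rot M (k + X.length) = (rot M k).rotate X.length := by
    unfold rot; rw [List.rotate_rotate]
  rw [this, h]
  rw [List.rotate_eq_drop_append_take (by simp)]
  simp

lemma rot_head {M k : ℕ} (hM : 0 < M) {z : Fin M} {L : List (Fin M)}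
    (h : rot M k = z :: L) : (z : ℕ) = k % M := by
  have h0 : 0 < (rot M k).length := by simp [hM]
  have hz : (rot M k).get ⟨0, h0⟩ = z := by
    simp [h]
  unfold rot at hz
  rw [List.get_rotate] at hz
  simp only [List.get_finRange] at hz
  have := congrArg (Fin.val) hz
  simpa using this.symm

lemma rot_eq_of_head {M i k : ℕ} (hM : 0 < M) {z : Fin M} {L L' : List (Fin M)}
    (h1 : rot M i = z :: L) (h2 : rot M k = z :: L') : rot M i = rot M k := by
  have e1 := rot_head hM h1
  have e2 := rot_head hM h2
  rw [← rot_mod M i, ← rot_mod M k, ← e1, ← e2]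

/-- Key periodicity lemma: two overlapping occurrences of rotations delete to
the same word. -/
lemma overlap_del {M : ℕ} (hM : 0 < M) {a b a' b' : List (Fin M)} {i k : ℕ}
    (h : a' ++ (rot M k ++ b') = a ++ (rot M i ++ b))
    (h1 : a'.length ≤ a.length) (h2 : a.length < a'.length + M) :
    a' ++ b' = a ++ b := by
  -- a' is a prefix of a
  have hpre : a' <+: a :=
    List.prefix_of_prefix_length_le ⟨rot M k ++ b', h⟩ ⟨rot M i ++ b, rfl⟩ h1
  obtain ⟨s, hs⟩ := hpre
  subst hs
  rw [List.append_assoc] at h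
  have h' : rot M k ++ b' = s ++ (rot M i ++ b) := List.append_cancel_left h
  rcases Nat.eq_zero_or_pos s.length with hs0 | hs0
  · have : s = [] := List.length_eq_zero_iff.1 hs0
    subst this
    simp only [List.nil_append, List.append_nil] at h' ⊢
    have hb : b' = b := by
      have := List.append_inj h' (by simp)
      exact this.2
    rw [hb]
  · -- s nonempty, shorter than rot M k
    have hslen : s.length < M := by
      have := h2; simp at this ⊢; omega
    -- rot M k = s ++ Z
    rcases List.append_eq_append_iff.1 h' with ⟨a'', ha1, ha2⟩ | ⟨Z, hZ1, hZ2⟩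
    · exfalso
      have : (rot M k).length ≤ s.length := by
        rw [ha1]; simp
      simp at this; omega
    · -- hZ1 : rot M k = s ++ Z, hZ2 : rot M i ++ b = Z ++ b'
      have hZlen : Z.length = M - s.length := by
        have := congrArg List.length hZ1
        simp at this; omega
      have hZpos : 0 < Z.length := by omega
      have hZle : Z.length ≤ (rot M i).length := by simp; omega
      rcases List.append_eq_append_iff.1 hZ2.symm with ⟨W, hW1, hW2⟩ | ⟨c', hc1, hc2⟩
      · -- hW1 : rot M i = Z ++ W, hW2 : b' = W ++ b
        have hcyc : Z ++ s = rot M (k + s.length) := rot_cycle hZ1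
        obtain ⟨z0, Z', hz0⟩ : ∃ z0 Z', Z = z0 :: Z' := by
          cases Z with
          | nil => simp at hZpos
          | cons z0 Z' => exact ⟨z0, Z', rfl⟩
        have heq : rot M i = rot M (k + s.length) := by
          apply rot_eq_of_head hM (z := z0) (L := Z' ++ W) (L' := Z' ++ s)
          · rw [hW1, hz0]; simp
          · rw [← hcyc, hz0]; simp
        have hsW : s = W := by
          have : Z ++ s = Z ++ W := by rw [hcyc, ← heq, hW1]
          exact List.append_cancel_left this
        rw [hW2, hsW]
        simp [List.append_assoc]
      · -- hc1 : Z = rot M i ++ c' — impossible by lengths unless c' = [] and lengths equal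
        exfalso
        have := congrArg List.length hc1
        simp at this; omega

/-- An occurrence of a rotation at position `p` (decidable form). -/
def occP (M : ℕ) (w : List (Fin M)) (p : ℕ) : Prop :=
  p + M ≤ w.length ∧ (w.drop p).take M ∈ (List.range M).map (rot M)

instance occP_dec (M : ℕ) (w : List (Fin M)) : DecidablePred (occP M w) := fun _ => by
  unfold occP; infer_instance

lemma occP_intro {M : ℕ} (hM : 0 < M) {w : List (Fin M)} {p k : ℕ}
    {a b : List (Fin M)} (hw : w = a ++ (rot M k ++ b)) (hp : a.length = p) :
    occP M w p := by
  constructor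
  · rw [hw, ← hp]; simp
  · have hdrop : w.drop p = rot M k ++ b := by
      rw [hw, ← hp, List.drop_left]
    have htake : (w.drop p).take M = rot M k := by
      rw [hdrop, List.take_left' (by simp)]
    rw [htake, ← rot_mod M k]
    exact List.mem_map_of_mem (List.mem_range.2 (Nat.mod_lt _ hM))

lemma occP_elim {M : ℕ} {w : List (Fin M)} {p : ℕ} (h : occP M w p) :
    ∃ k a b, w = a ++ (rot M k ++ b) ∧ a.length = p := by
  obtain ⟨hlen, hmem⟩ := h
  obtain ⟨k, -, hk⟩ := List.mem_map.1 hmem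
  refine ⟨k, w.take p, w.drop (p + M), ?_, ?_⟩
  · rw [hk]
    have h1 : w.drop (p + M) = (w.drop p).drop M := by
      rw [List.drop_drop, Nat.add_comm]
    rw [h1, List.take_append_drop, List.take_append_drop]
  · simp; omega

lemma occP_length {M : ℕ} {w : List (Fin M)} {p : ℕ} (h : occP M w p) :
    p + M ≤ w.length := h.1

lemma occP_take_drop {M : ℕ} {w : List (Fin M)} {p : ℕ} (h : occP M w p) :
    ∃ k a b, w = a ++ (rot M k ++ b) ∧ a.length = p ∧
      w.take p = a ∧ w.drop (p + M) = b := by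
  obtain ⟨k, a, b, hw, hp⟩ := occP_elim h
  refine ⟨k, a, b, hw, hp, ?_, ?_⟩
  · rw [hw, ← hp, List.take_left]
  · rw [hw, ← List.append_assoc, List.drop_left']
    simp [hp]

/-- The normal form extraction: repeatedly remove the leftmost rotation occurrence. -/
noncomputable def Phi {M : ℕ} (hM : 0 < M) (w : List (Fin M)) : ℕ × List (Fin M) :=
  haveI : Decidable (∃ p, occP M w p) := Classical.dec _
  if h : ∃ p, occP M w p then
    have hlt : (w.take (Nat.find h) ++ w.drop (Nat.find h + M)).length < w.length := by
      have hspec := Nat.find_spec h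
      obtain ⟨k, a, b, hw, hp, ht, hd⟩ := occP_take_drop hspec
      rw [ht, hd, hw]
      simp; omega
    ((Phi hM (w.take (Nat.find h) ++ w.drop (Nat.find h + M))).1 + 1,
     (Phi hM (w.take (Nat.find h) ++ w.drop (Nat.find h + M))).2)
  else (0, w)
termination_by w.length
decreasing_by simpa using hlt

lemma Phi_of_no_occ {M : ℕ} (hM : 0 < M) {w : List (Fin M)}
    (h : ¬ ∃ p, occP M w p) : Phi hM w = (0, w) := by
  conv_lhs => unfold Phi
  split
  · exact absurd (by assumption) h
  · rfl

lemma Phi_of_min_occ {M : ℕ} (hM : 0 < M) {w : List (Fin M)} {p : ℕ}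
    (hp : occP M w p) (hmin : ∀ q, occP M w q → p ≤ q) :
    Phi hM w = ((Phi hM (w.take p ++ w.drop (p + M))).1 + 1,
      (Phi hM (w.take p ++ w.drop (p + M))).2) := by
  conv_lhs => unfold Phi
  split
  · rename_i h
    have hfind : Nat.find h = p :=
      le_antisymm (Nat.find_min' h hp) (hmin _ (Nat.find_spec h))
    simp only [hfind]
  · rename_i h
    exact absurd ⟨p, hp⟩ h

lemma take_drop_of_decomp {M : ℕ} {w a b : List (Fin M)} {k p : ℕ}
    (hw : w = a ++ (rot M k ++ b)) (hp : a.length = p) :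
    w.take p = a ∧ w.drop (p + M) = b := by
  constructor
  · rw [hw, ← hp, List.take_left]
  · rw [hw, ← List.append_assoc, List.drop_left']
    simp [hp]

/-- One step of the cyclic rewriting: replace one rotation occurrence by another. -/
def StepA (M : ℕ) (w w' : List (Fin M)) : Prop :=
  ∃ a b i j, w = a ++ (rot M i ++ b) ∧ w' = a ++ (rot M j ++ b)

/-- Equivalence generated by `StepA`. -/
def AEq (M : ℕ) : List (Fin M) → List (Fin M) → Prop := Relation.EqvGen (StepA M)

lemma StepA.symm' {M : ℕ} {w w' : List (Fin M)} (h : StepA M w w') : StepA M w' w := by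
  obtain ⟨a, b, i, j, h1, h2⟩ := h
  exact ⟨a, b, j, i, h2, h1⟩

lemma AEq.refl' {M : ℕ} (w : List (Fin M)) : AEq M w w := Relation.EqvGen.refl w

lemma AEq.symm' {M : ℕ} {w w' : List (Fin M)} (h : AEq M w w') : AEq M w' w :=
  Relation.EqvGen.symm _ _ h

lemma AEq.trans' {M : ℕ} {w₁ w₂ w₃ : List (Fin M)} (h1 : AEq M w₁ w₂)
    (h2 : AEq M w₂ w₃) : AEq M w₁ w₃ := Relation.EqvGen.trans _ _ _ h1 h2

lemma StepA.append_left {M : ℕ} {w w' : List (Fin M)} (c : List (Fin M))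
    (h : StepA M w w') : StepA M (c ++ w) (c ++ w') := by
  obtain ⟨a, b, i, j, h1, h2⟩ := h
  exact ⟨c ++ a, b, i, j, by rw [h1, List.append_assoc], by rw [h2, List.append_assoc]⟩

lemma StepA.append_right {M : ℕ} {w w' : List (Fin M)} (c : List (Fin M))
    (h : StepA M w w') : StepA M (w ++ c) (w' ++ c) := by
  obtain ⟨a, b, i, j, h1, h2⟩ := h
  exact ⟨a, b ++ c, i, j, by rw [h1]; simp [List.append_assoc],
    by rw [h2]; simp [List.append_assoc]⟩

lemma AEq.append_left {M : ℕ} (c : List (Fin M)) {w w' : List (Fin M)}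
    (h : AEq M w w') : AEq M (c ++ w) (c ++ w') := by
  induction h with
  | rel x y hs => exact Relation.EqvGen.rel _ _ (hs.append_left c)
  | refl x => exact Relation.EqvGen.refl _
  | symm x y _ ih => exact Relation.EqvGen.symm _ _ ih
  | trans x y z _ _ ih1 ih2 => exact Relation.EqvGen.trans _ _ _ ih1 ih2

lemma AEq.append_right {M : ℕ} (c : List (Fin M)) {w w' : List (Fin M)}
    (h : AEq M w w') : AEq M (w ++ c) (w' ++ c) := by
  induction h with
  | rel x y hs => exact Relation.EqvGen.rel _ _ (hs.append_right c)
  | refl x => exact Relation.EqvGen.refl _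
  | symm x y _ ih => exact Relation.EqvGen.symm _ _ ih
  | trans x y z _ _ ih1 ih2 => exact Relation.EqvGen.trans _ _ _ ih1 ih2

lemma AEq.append {M : ℕ} {w₁ w₂ v₁ v₂ : List (Fin M)} (h1 : AEq M w₁ v₁)
    (h2 : AEq M w₂ v₂) : AEq M (w₁ ++ w₂) (v₁ ++ v₂) :=
  AEq.trans' (AEq.append_right w₂ h1) (AEq.append_left v₁ h2)

/-- Main invariance: `Phi` does not change when a rotation occurrence is replaced
by the standard rotation. -/
theorem Phi_step {M : ℕ} (hM : 0 < M) :
    ∀ (N : ℕ) (w a b : List (Fin M)) (i : ℕ), w.length ≤ N →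
      w = a ++ (rot M i ++ b) → Phi hM w = Phi hM (a ++ (rot M 0 ++ b)) := by
  intro N
  induction N with
  | zero =>
    intro w a b i hlen hw
    exfalso
    have : M ≤ w.length := by rw [hw]; simp; omega
    omega
  | succ N IH =>
    intro w a b i hlen hw
    set w' : List (Fin M) := a ++ (rot M 0 ++ b) with hw'
    set q := a.length with hq
    have hoccq : occP M w q := occP_intro hM hw rfl
    have hoccq' : occP M w' q := occP_intro hM hw' rfl
    have hex : ∃ p, occP M w p := ⟨q, hoccq⟩
    have hp : occP M w (Nat.find hex) := Nat.find_spec hex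
    set p := Nat.find hex with hpdef
    have hpmin : ∀ r, occP M w r → p ≤ r := fun r hr => Nat.find_min' hex hr
    have hpq : p ≤ q := hpmin q hoccq
    obtain ⟨k, a₁, b₁, hw1, hlen1⟩ := occP_elim hp
    by_cases hcase : p + M ≤ q
    · -- occurrence entirely inside `a`
      have hpre : (a₁ ++ rot M k) <+: a := by
        apply List.prefix_of_prefix_length_le (l₃ := w)
        · exact ⟨b₁, by rw [hw1]; simp [List.append_assoc]⟩
        · exact ⟨rot M i ++ b, hw.symm⟩
        · simp [hlen1]; omega
      obtain ⟨a₂, ha2⟩ := hpre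
      have hwalt : w = a₁ ++ (rot M k ++ (a₂ ++ (rot M i ++ b))) := by
        rw [hw, ← ha2]; simp [List.append_assoc]
      have hb1 : b₁ = a₂ ++ (rot M i ++ b) := by
        have h0 : a₁ ++ (rot M k ++ b₁) = a₁ ++ (rot M k ++ (a₂ ++ (rot M i ++ b))) := by
          rw [← hw1, hwalt]
        exact List.append_cancel_left (List.append_cancel_left h0)
      have hw'alt : w' = a₁ ++ (rot M k ++ (a₂ ++ (rot M 0 ++ b))) := by
        rw [hw', ← ha2]; simp [List.append_assoc]
      have hocc' : occP M w' p := occP_intro hM hw'alt hlen1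
      have hmin' : ∀ r, occP M w' r → p ≤ r := by
        intro r hr
        by_contra hlt
        push_neg at hlt
        obtain ⟨k', c₁, d₁, hw'', hlen''⟩ := occP_elim hr
        have hpre2 : (c₁ ++ rot M k') <+: a := by
          apply List.prefix_of_prefix_length_le (l₃ := w')
          · exact ⟨d₁, by rw [hw'']; simp [List.append_assoc]⟩
          · exact ⟨rot M 0 ++ b, hw'.symm⟩
          · simp [hlen'']; omega
        obtain ⟨e, he⟩ := hpre2
        have hwocc : w = c₁ ++ (rot M k' ++ (e ++ (rot M i ++ b))) := by
          rw [hw, ← he]; simp [List.append_assoc]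
        exact absurd (hpmin r (occP_intro hM hwocc hlen'')) (not_le.2 hlt)
      rw [Phi_of_min_occ hM hp hpmin, Phi_of_min_occ hM hocc' hmin']
      obtain ⟨ht1, hd1⟩ := take_drop_of_decomp hw1 hlen1
      obtain ⟨ht2, hd2⟩ := take_drop_of_decomp hw'alt hlen1
      rw [ht1, hd1, ht2, hd2, hb1]
      have harr1 : a₁ ++ (a₂ ++ (rot M i ++ b)) = (a₁ ++ a₂) ++ (rot M i ++ b) := by
        simp [List.append_assoc]
      have harr2 : a₁ ++ (a₂ ++ (rot M 0 ++ b)) = (a₁ ++ a₂) ++ (rot M 0 ++ b) := by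
        simp [List.append_assoc]
      have hlen3 : ((a₁ ++ a₂) ++ (rot M i ++ b)).length ≤ N := by
        have h1 : w.length ≤ N + 1 := hlen
        have h2 : w.length = a₁.length + (M + b₁.length) := by rw [hw1]; simp
        have h3 : b₁.length = a₂.length + (M + b.length) := by rw [hb1]; simp
        simp; omega
      have := IH ((a₁ ++ a₂) ++ (rot M i ++ b)) (a₁ ++ a₂) b i hlen3 rfl
      rw [harr1, harr2, this]
    · -- occurrence overlaps the designated region
      push_neg at hcase
      have hdel1 : a₁ ++ b₁ = a ++ b := by
        apply overlap_del hM (i := i) (k := k)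
        · rw [← hw1, hw]
        · omega
        · omega
      have hex' : ∃ r, occP M w' r := ⟨q, hoccq'⟩
      have hp' : occP M w' (Nat.find hex') := Nat.find_spec hex'
      set p' := Nat.find hex' with hp'def
      have hp'q : p' ≤ q := Nat.find_min' hex' hoccq'
      obtain ⟨k', a₂, b₂, hw2, hlen2⟩ := occP_elim hp'
      have hcase' : q < p' + M := by
        by_contra hcon
        push_neg at hcon
        have hpre2 : (a₂ ++ rot M k') <+: a := by
          apply List.prefix_of_prefix_length_le (l₃ := w')
          · exact ⟨b₂, by rw [hw2]; simp [List.append_assoc]⟩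
          · exact ⟨rot M 0 ++ b, hw'.symm⟩
          · simp [hlen2]; omega
        obtain ⟨e, he⟩ := hpre2
        have hwocc : w = a₂ ++ (rot M k' ++ (e ++ (rot M i ++ b))) := by
          rw [hw, ← he]; simp [List.append_assoc]
        have := hpmin p' (occP_intro hM hwocc hlen2)
        omega
      have hdel2 : a₂ ++ b₂ = a ++ b := by
        apply overlap_del hM (i := 0) (k := k')
        · rw [← hw2, hw']
        · omega
        · omega
      rw [Phi_of_min_occ hM hp hpmin, Phi_of_min_occ hM hp' (fun r hr => Nat.find_min' hex' hr)]
      obtain ⟨ht1, hd1⟩ := take_drop_of_decomp hw1 hlen1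
      obtain ⟨ht2, hd2⟩ := take_drop_of_decomp hw2 hlen2
      rw [ht1, hd1, ht2, hd2, hdel1, hdel2]

theorem Phi_aeq {M : ℕ} (hM : 0 < M) {w w' : List (Fin M)} (h : AEq M w w') :
    Phi hM w = Phi hM w' := by
  induction h with
  | rel x y hs =>
    obtain ⟨a, b, i, j, h1, h2⟩ := hs
    rw [Phi_step hM x.length x a b i le_rfl h1,
      Phi_step hM y.length y a b j le_rfl h2]
  | refl x => rfl
  | symm x y _ ih => exact ih.symm
  | trans x y z _ _ ih1 ih2 => exact ih1.trans ih2

/-- `k` copies of the standard cycle. -/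
def rotPow (M : ℕ) : ℕ → List (Fin M)
  | 0 => []
  | k + 1 => rot M 0 ++ rotPow M k

lemma rot_cons {M : ℕ} (hM : 0 < M) (x : Fin M) :
    ∃ Y, rot M x.val = x :: Y ∧ Y ++ [x] = rot M (x.val + 1) := by
  obtain ⟨z, L, hzL⟩ : ∃ z L, rot M x.val = z :: L := by
    cases h : rot M x.val with
    | nil => exfalso; have := length_rot M x.val; rw [h] at this; simp at this; omega
    | cons z L => exact ⟨z, L, rfl⟩
  have hz : (z : ℕ) = x.val % M := rot_head hM hzL
  have hzx : z = x := by
    apply Fin.ext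
    rw [hz, Nat.mod_eq_of_lt x.isLt]
  subst hzx
  refine ⟨L, hzL, ?_⟩
  have := rot_cycle (X := [z]) (Y := L) (by simpa using hzL)
  simpa using this

/-- The standard cycle commutes to the front. -/
lemma aeq_rot0_left {M : ℕ} (hM : 0 < M) (a : List (Fin M)) :
    ∀ d, AEq M (a ++ (rot M 0 ++ d)) (rot M 0 ++ (a ++ d)) := by
  induction a using List.reverseRecOn with
  | nil => intro d; simp; exact AEq.refl' _
  | append_singleton as x IH =>
    intro d
    obtain ⟨Y, hY1, hY2⟩ := rot_cons hM x
    have step1 : StepA M ((as ++ [x]) ++ (rot M 0 ++ d)) ((as ++ [x]) ++ (rot M (x.val + 1) ++ d)) :=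
      ⟨as ++ [x], d, 0, x.val + 1, rfl, rfl⟩
    have heq : (as ++ [x]) ++ (rot M (x.val + 1) ++ d) = as ++ (rot M x.val ++ ([x] ++ d)) := by
      rw [← hY2, hY1]
      simp [List.append_assoc]
    have step2 : StepA M (as ++ (rot M x.val ++ ([x] ++ d))) (as ++ (rot M 0 ++ ([x] ++ d))) :=
      ⟨as, [x] ++ d, x.val, 0, rfl, rfl⟩
    have h3 : AEq M (as ++ (rot M 0 ++ ([x] ++ d))) (rot M 0 ++ (as ++ ([x] ++ d))) := IH _
    have hfin : rot M 0 ++ (as ++ ([x] ++ d)) = rot M 0 ++ ((as ++ [x]) ++ d) := by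
      simp [List.append_assoc]
    have c1 : AEq M ((as ++ [x]) ++ (rot M 0 ++ d)) (as ++ (rot M x.val ++ ([x] ++ d))) := by
      rw [← heq]; exact Relation.EqvGen.rel _ _ step1
    have h3' : AEq M (as ++ (rot M 0 ++ ([x] ++ d))) (rot M 0 ++ ((as ++ [x]) ++ d)) := by
      rw [← hfin]; exact h3
    exact AEq.trans' c1 (AEq.trans' (Relation.EqvGen.rel _ _ step2) h3')

theorem Phi_rot0_cons {M : ℕ} (hM : 0 < M) (x : List (Fin M)) :
    Phi hM (rot M 0 ++ x) = ((Phi hM x).1 + 1, (Phi hM x).2) := by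
  have hocc : occP M (rot M 0 ++ x) 0 :=
    occP_intro hM (k := 0) (a := []) (b := x) (by simp) rfl
  rw [Phi_of_min_occ hM hocc (fun r _ => Nat.zero_le r)]
  have ht : (rot M 0 ++ x).take 0 = ([] : List (Fin M)) := by simp
  have hd : (rot M 0 ++ x).drop (0 + M) = x := by
    rw [Nat.zero_add]
    exact List.drop_left' (by simp)
  rw [ht, hd]
  simp

theorem Phi_repr {M : ℕ} (hM : 0 < M) :
    ∀ (N : ℕ) (w : List (Fin M)), w.length ≤ N →
      AEq M w (rotPow M (Phi hM w).1 ++ (Phi hM w).2) := by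
  intro N
  induction N with
  | zero =>
    intro w hlen
    have hw : w = [] := List.length_eq_zero_iff.1 (Nat.le_zero.1 hlen)
    subst hw
    have : ¬ ∃ p, occP M ([] : List (Fin M)) p := by
      rintro ⟨p, hp⟩
      have := occP_length hp
      simp at this; omega
    rw [Phi_of_no_occ hM this]
    exact AEq.refl' _
  | succ N IH =>
    intro w hlen
    by_cases hex : ∃ p, occP M w p
    · have hp : occP M w (Nat.find hex) := Nat.find_spec hex
      rw [Phi_of_min_occ hM hp (fun r hr => Nat.find_min' hex hr)]
      obtain ⟨k, a, b, hw1, hlen1, ht, hd⟩ := occP_take_drop hp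
      rw [ht, hd]
      have hstep : AEq M w (a ++ (rot M 0 ++ b)) := by
        rw [hw1]
        exact Relation.EqvGen.rel _ _ ⟨a, b, k, 0, rfl, rfl⟩
      have hcent : AEq M (a ++ (rot M 0 ++ b)) (rot M 0 ++ (a ++ b)) :=
        aeq_rot0_left hM a b
      have hlen2 : (a ++ b).length ≤ N := by
        have h1 : w.length = a.length + (M + b.length) := by rw [hw1]; simp
        simp; omega
      have hIH : AEq M (a ++ b) (rotPow M (Phi hM (a ++ b)).1 ++ (Phi hM (a ++ b)).2) :=
        IH _ hlen2
      have hfin : rot M 0 ++ (rotPow M (Phi hM (a ++ b)).1 ++ (Phi hM (a ++ b)).2)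
          = rotPow M ((Phi hM (a ++ b)).1 + 1) ++ (Phi hM (a ++ b)).2 := by
        show _ = (rot M 0 ++ rotPow M (Phi hM (a ++ b)).1) ++ _
        simp [List.append_assoc]
      exact AEq.trans' hstep (AEq.trans' hcent (by
        rw [← hfin]; exact AEq.append_left _ hIH))
    · rw [Phi_of_no_occ hM hex]
      exact AEq.refl' _

/-- Left cancellation of the full cycle in the cyclic monoid. -/
theorem rot0_cancel {M : ℕ} (hM : 0 < M) {x y : List (Fin M)}
    (h : AEq M (rot M 0 ++ x) (rot M 0 ++ y)) : AEq M x y := by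
  have h1 := Phi_aeq hM h
  rw [Phi_rot0_cons hM, Phi_rot0_cons hM] at h1
  have h2 : Phi hM x = Phi hM y := by
    have hfst : (Phi hM x).1 = (Phi hM y).1 := by
      have := congrArg Prod.fst h1; simpa using this
    have hsnd : (Phi hM x).2 = (Phi hM y).2 := by
      have := congrArg Prod.snd h1; simpa using this
    exact Prod.ext hfst hsnd
  have hx := Phi_repr hM x.length x le_rfl
  have hy := Phi_repr hM y.length y le_rfl
  rw [h2] at hx
  exact AEq.trans' hx (AEq.symm' hy)


variable {m n : ℕ}

/-- Word-level congruence of `G⁺_{m,n}`. -/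
def GEq (m n : ℕ) (x y : List (Gen m n)) : Prop :=
  conGen (Rel m n) (FreeMonoid.ofList x) (FreeMonoid.ofList y)

lemma GEq.refl' (x : List (Gen m n)) : GEq m n x x := (conGen (Rel m n)).refl _

lemma GEq.symm' {x y : List (Gen m n)} (h : GEq m n x y) : GEq m n y x :=
  (conGen (Rel m n)).symm h

lemma GEq.trans' {x y z : List (Gen m n)} (h1 : GEq m n x y) (h2 : GEq m n y z) :
    GEq m n x z := (conGen (Rel m n)).trans h1 h2

lemma GEq.append {x y x' y' : List (Gen m n)} (h1 : GEq m n x x')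
    (h2 : GEq m n y y') : GEq m n (x ++ y) (x' ++ y') := by
  have := (conGen (Rel m n)).mul h1 h2
  rwa [← FreeMonoid.ofList_append, ← FreeMonoid.ofList_append] at this

lemma GEq.cons {g : Gen m n} {x y : List (Gen m n)} (h : GEq m n x y) :
    GEq m n (g :: x) (g :: y) := GEq.append (GEq.refl' [g]) h

lemma GEq.of_rel {x y : FreeMonoid (Gen m n)} (h : Rel m n x y) :
    conGen (Rel m n) x y := ConGen.Rel.of _ _ h

/-- All rotations of `wordT` are congruent. -/
lemma grotT (k k' : ℕ) : GEq m n ((wordT m n).rotate k) ((wordT m n).rotate k') := by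
  have h1 : GEq m n (wordT m n) ((wordT m n).rotate k) := GEq.of_rel (Rel.rotT k)
  have h2 : GEq m n (wordT m n) ((wordT m n).rotate k') := GEq.of_rel (Rel.rotT k')
  exact GEq.trans' (GEq.symm' h1) h2

lemma grotU (k k' : ℕ) : GEq m n ((wordU m n).rotate k) ((wordU m n).rotate k') := by
  have h1 : GEq m n (wordU m n) ((wordU m n).rotate k) := GEq.of_rel (Rel.rotU k)
  have h2 : GEq m n (wordU m n) ((wordU m n).rotate k') := GEq.of_rel (Rel.rotU k')
  exact GEq.trans' (GEq.symm' h1) h2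

lemma gcomm (i : Fin m) (j : Fin n) :
    GEq m n [Gen.t i, Gen.u j] [Gen.u j, Gen.t i] := GEq.of_rel (Rel.comm i j)

/-- Projection to the `{s,t}`-alphabet. -/
def fT (m n : ℕ) : Gen m n → Option (Fin (m + 1))
  | Gen.s => some 0
  | Gen.t i => some i.succ
  | Gen.u _ => none

/-- Projection to the `{s,u}`-alphabet. -/
def fU (m n : ℕ) : Gen m n → Option (Fin (n + 1))
  | Gen.s => some 0
  | Gen.u j => some j.succ
  | Gen.t _ => none

def piT (m n : ℕ) (x : List (Gen m n)) : List (Fin (m + 1)) := x.filterMap (fT m n)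

def piU (m n : ℕ) (x : List (Gen m n)) : List (Fin (n + 1)) := x.filterMap (fU m n)

@[simp] lemma piT_append (x y : List (Gen m n)) :
    piT m n (x ++ y) = piT m n x ++ piT m n y := List.filterMap_append ..

@[simp] lemma piU_append (x y : List (Gen m n)) :
    piU m n (x ++ y) = piU m n x ++ piU m n y := List.filterMap_append ..

@[simp] lemma piT_map_t (l : List (Fin m)) :
    piT m n (l.map Gen.t) = l.map Fin.succ := by
  induction l with
  | nil => rfl
  | cons a l ih => simp only [List.map_cons, piT, List.filterMap_cons, fT] at ih ⊢; rw [ih]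

@[simp] lemma piT_map_u (l : List (Fin n)) :
    piT m n (l.map Gen.u) = [] := by
  induction l with
  | nil => rfl
  | cons a l ih => simp_all [piT, fT, List.filterMap_cons]

@[simp] lemma piU_map_u (l : List (Fin n)) :
    piU m n (l.map Gen.u) = l.map Fin.succ := by
  induction l with
  | nil => rfl
  | cons a l ih => simp only [List.map_cons, piU, List.filterMap_cons, fU] at ih ⊢; rw [ih]

@[simp] lemma piU_map_t (l : List (Fin m)) :
    piU m n (l.map Gen.t) = [] := by
  induction l with
  | nil => rfl
  | cons a l ih => simp_all [piU, fU, List.filterMap_cons]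

@[simp] lemma filterMap_fT_u (p : List (Fin n)) :
    List.filterMap (fT m n ∘ Gen.u) p = [] := by
  induction p with
  | nil => rfl
  | cons a p ih => simp_all [List.filterMap_cons, fT, Function.comp]

@[simp] lemma filterMap_fU_t (L : List (Fin m)) :
    List.filterMap (fU m n ∘ Gen.t) L = [] := by
  induction L with
  | nil => rfl
  | cons a p ih => simp_all [List.filterMap_cons, fU, Function.comp]

@[simp] lemma filterMap_fT_t (L : List (Fin m)) :
    List.filterMap (fT m n ∘ Gen.t) L = L.map Fin.succ := by
  induction L with
  | nil => rfl
  | cons a p ih => simp only [List.filterMap_cons, List.map_cons, Function.comp, fT] at ih ⊢; rw [ih]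

@[simp] lemma filterMap_fU_u (p : List (Fin n)) :
    List.filterMap (fU m n ∘ Gen.u) p = p.map Fin.succ := by
  induction p with
  | nil => rfl
  | cons a p ih => simp only [List.filterMap_cons, List.map_cons, Function.comp, fU] at ih ⊢; rw [ih]

@[simp] lemma piT_nil : piT m n [] = [] := rfl
@[simp] lemma piU_nil : piU m n [] = [] := rfl

@[simp] lemma piT_cons_s (x : List (Gen m n)) :
    piT m n (Gen.s :: x) = 0 :: piT m n x := by
  simp [piT, List.filterMap_cons, fT]

@[simp] lemma piT_cons_t (i : Fin m) (x : List (Gen m n)) :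
    piT m n (Gen.t i :: x) = i.succ :: piT m n x := by
  simp [piT, List.filterMap_cons, fT]

@[simp] lemma piT_cons_u (j : Fin n) (x : List (Gen m n)) :
    piT m n (Gen.u j :: x) = piT m n x := by
  simp [piT, List.filterMap_cons, fT]

@[simp] lemma piU_cons_s (x : List (Gen m n)) :
    piU m n (Gen.s :: x) = 0 :: piU m n x := by
  simp [piU, List.filterMap_cons, fU]

@[simp] lemma piU_cons_t (i : Fin m) (x : List (Gen m n)) :
    piU m n (Gen.t i :: x) = piU m n x := by
  simp [piU, List.filterMap_cons, fU]

@[simp] lemma piU_cons_u (j : Fin n) (x : List (Gen m n)) :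
    piU m n (Gen.u j :: x) = j.succ :: piU m n x := by
  simp [piU, List.filterMap_cons, fU]

lemma ofFn_t : (List.ofFn (fun i => Gen.t i : Fin m → Gen m n)) = (List.finRange m).map Gen.t := by
  simp [List.ofFn_eq_map]

lemma ofFn_u : (List.ofFn (fun j => Gen.u j : Fin n → Gen m n)) = (List.finRange n).map Gen.u := by
  simp [List.ofFn_eq_map]

lemma finRange_succ_eq (m : ℕ) :
    List.finRange (m + 1) = 0 :: (List.finRange m).map Fin.succ := by
  exact List.finRange_succ

@[simp] lemma piT_wordT : piT m n (wordT m n) = rot (m + 1) 0 := by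
  rw [wordT, rot_zero, ofFn_t, finRange_succ_eq]
  simp

@[simp] lemma piU_wordU : piU m n (wordU m n) = rot (n + 1) 0 := by
  rw [wordU, rot_zero, ofFn_u, finRange_succ_eq]
  simp

@[simp] lemma piU_wordT : piU m n (wordT m n) = [0] := by
  rw [wordT, ofFn_t]
  simp

@[simp] lemma piT_wordU : piT m n (wordU m n) = [0] := by
  rw [wordU, ofFn_u]
  simp

@[simp] lemma piT_wordFull : piT m n (wordFull m n) = rot (m + 1) 0 := by
  rw [wordFull, rot_zero, ofFn_t, ofFn_u, finRange_succ_eq]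
  simp

@[simp] lemma piU_wordFull : piU m n (wordFull m n) = rot (n + 1) 0 := by
  rw [wordFull, rot_zero, ofFn_t, ofFn_u, finRange_succ_eq]
  simp

lemma filterMap_take_drop {α β : Type*} (f : α → Option β) :
    ∀ (l : List α) (L : List β), l.filterMap f = L → l.length = L.length →
      ∀ k, (l.take k).filterMap f = L.take k ∧ (l.drop k).filterMap f = L.drop k := by
  intro l
  induction l with
  | nil =>
    intro L h hlen k
    simp at h
    subst h
    simp
  | cons x l ih =>
    intro L h hlen k
    rw [List.filterMap_cons] at h
    cases hfx : f x with
    | none =>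
      exfalso
      rw [hfx] at h
      have h1 : l.filterMap f = L := h
      have := List.length_filterMap_le f l
      rw [h1] at this
      simp at hlen
      omega
    | some b =>
      rw [hfx] at h
      obtain ⟨L', rfl⟩ : ∃ L', L = b :: L' := by
        cases L with
        | nil => simp at h
        | cons c L' =>
          have hc : b = c := by
            have := congrArg (List.head?) h
            simpa using this
          exact ⟨L', by rw [hc]⟩
      have h2 : l.filterMap f = L' := by
        have := congrArg (List.tail) h
        simpa using this
      have hlen2 : l.length = L'.length := by simp at hlen; omega
      cases k with
      | zero => constructor <;> simp [List.filterMap_cons, hfx, h2]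
      | succ k =>
        obtain ⟨h3, h4⟩ := ih L' h2 hlen2 k
        constructor
        · simp [List.filterMap_cons, hfx, h3]
        · simp [h4]

lemma length_wordT : (wordT m n).length = m + 1 := by simp [wordT]

lemma length_wordU : (wordU m n).length = n + 1 := by simp [wordU]

lemma piT_rotT (j : ℕ) : piT m n ((wordT m n).rotate j) = rot (m + 1) j := by
  have hlen : (wordT m n).length = m + 1 := length_wordT
  have hj'lt : j % (m + 1) < m + 1 := Nat.mod_lt _ (Nat.succ_pos m)
  have hrw : (wordT m n).rotate j = (wordT m n).rotate (j % (m + 1)) := by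
    rw [← hlen, List.rotate_mod]
  have hrw2 : rot (m + 1) j = rot (m + 1) (j % (m + 1)) := (rot_mod _ _).symm
  have hj'le : j % (m + 1) ≤ (wordT m n).length := by rw [hlen]; omega
  rw [hrw, hrw2, List.rotate_eq_drop_append_take hj'le]
  have hfr : piT m n (wordT m n) = List.finRange (m + 1) := by
    rw [piT_wordT, rot_zero]
  obtain ⟨ht, hd⟩ := filterMap_take_drop (fT m n) (wordT m n) (List.finRange (m + 1))
    hfr (by simp [hlen]) (j % (m + 1))
  show ((wordT m n).drop (j % (m + 1)) ++ (wordT m n).take (j % (m + 1))).filterMap (fT m n) = _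
  rw [List.filterMap_append, ht, hd]
  unfold rot
  rw [List.rotate_eq_drop_append_take (by simpa using hj'lt.le)]

lemma piU_rotU (j : ℕ) : piU m n ((wordU m n).rotate j) = rot (n + 1) j := by
  have hlen : (wordU m n).length = n + 1 := length_wordU
  have hj'lt : j % (n + 1) < n + 1 := Nat.mod_lt _ (Nat.succ_pos n)
  have hrw : (wordU m n).rotate j = (wordU m n).rotate (j % (n + 1)) := by
    rw [← hlen, List.rotate_mod]
  have hrw2 : rot (n + 1) j = rot (n + 1) (j % (n + 1)) := (rot_mod _ _).symm
  have hj'le : j % (n + 1) ≤ (wordU m n).length := by rw [hlen]; omega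
  rw [hrw, hrw2, List.rotate_eq_drop_append_take hj'le]
  have hfr : piU m n (wordU m n) = List.finRange (n + 1) := by
    rw [piU_wordU, rot_zero]
  obtain ⟨ht, hd⟩ := filterMap_take_drop (fU m n) (wordU m n) (List.finRange (n + 1))
    hfr (by simp [hlen]) (j % (n + 1))
  show ((wordU m n).drop (j % (n + 1)) ++ (wordU m n).take (j % (n + 1))).filterMap (fU m n) = _
  rw [List.filterMap_append, ht, hd]
  unfold rot
  rw [List.rotate_eq_drop_append_take (by simpa using hj'lt.le)]

lemma piU_rotT (j : ℕ) : piU m n ((wordT m n).rotate j) = [0] := by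
  have hperm : (wordT m n).rotate j ~ wordT m n := List.rotate_perm _ _
  have := hperm.filterMap (fU m n)
  rw [show (wordT m n).filterMap (fU m n) = piU m n (wordT m n) from rfl] at this
  rw [piU_wordT] at this
  exact List.perm_singleton.1 this

lemma piT_rotU (j : ℕ) : piT m n ((wordU m n).rotate j) = [0] := by
  have hperm : (wordU m n).rotate j ~ wordU m n := List.rotate_perm _ _
  have := hperm.filterMap (fT m n)
  rw [show (wordU m n).filterMap (fT m n) = piT m n (wordU m n) from rfl] at this
  rw [piT_wordU] at this
  exact List.perm_singleton.1 this

lemma aeq_rot_rot (M i j : ℕ) : AEq M (rot M i) (rot M j) :=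
  Relation.EqvGen.rel _ _ ⟨[], [], i, j, by simp, by simp⟩

/-- The congruence on words given by `AEq` of the `T`-projections. -/
def conT (m n : ℕ) : Con (FreeMonoid (Gen m n)) where
  r x y := AEq (m + 1) (piT m n x.toList) (piT m n y.toList)
  iseqv := ⟨fun _ => AEq.refl' _, AEq.symm', AEq.trans'⟩
  mul' := by
    intro a b c d h1 h2
    show AEq (m + 1) (piT m n (a.toList ++ c.toList)) (piT m n (b.toList ++ d.toList))
    rw [piT_append, piT_append]
    exact AEq.append h1 h2

def conU (m n : ℕ) : Con (FreeMonoid (Gen m n)) where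
  r x y := AEq (n + 1) (piU m n x.toList) (piU m n y.toList)
  iseqv := ⟨fun _ => AEq.refl' _, AEq.symm', AEq.trans'⟩
  mul' := by
    intro a b c d h1 h2
    show AEq (n + 1) (piU m n (a.toList ++ c.toList)) (piU m n (b.toList ++ d.toList))
    rw [piU_append, piU_append]
    exact AEq.append h1 h2

lemma geq_aeqT {x y : List (Gen m n)} (h : GEq m n x y) :
    AEq (m + 1) (piT m n x) (piT m n y) := by
  have hle : conGen (Rel m n) ≤ conT m n := by
    apply Con.conGen_le.2
    intro a b hab
    cases hab with
    | rotT j =>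
      show AEq (m + 1) (piT m n (wordT m n)) (piT m n ((wordT m n).rotate j))
      rw [piT_wordT, piT_rotT]
      exact aeq_rot_rot _ _ _
    | rotU j =>
      show AEq (m + 1) (piT m n (wordU m n)) (piT m n ((wordU m n).rotate j))
      rw [piT_wordU, piT_rotU]
      exact AEq.refl' _
    | comm i j =>
      show AEq (m + 1) (piT m n [Gen.t i, Gen.u j]) (piT m n [Gen.u j, Gen.t i])
      simp
      exact AEq.refl' _
  exact hle h

lemma geq_aeqU {x y : List (Gen m n)} (h : GEq m n x y) :
    AEq (n + 1) (piU m n x) (piU m n y) := by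
  have hle : conGen (Rel m n) ≤ conU m n := by
    apply Con.conGen_le.2
    intro a b hab
    cases hab with
    | rotT j =>
      show AEq (n + 1) (piU m n (wordT m n)) (piU m n ((wordT m n).rotate j))
      rw [piU_wordT, piU_rotT]
      exact AEq.refl' _
    | rotU j =>
      show AEq (n + 1) (piU m n (wordU m n)) (piU m n ((wordU m n).rotate j))
      rw [piU_wordU, piU_rotU]
      exact aeq_rot_rot _ _ _
    | comm i j =>
      show AEq (n + 1) (piU m n [Gen.t i, Gen.u j]) (piU m n [Gen.u j, Gen.t i])
      simp
      exact AEq.refl' _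
  exact hle h

lemma geq_t_past_us (i : Fin m) :
    ∀ (α : List (Fin n)) (R : List (Gen m n)),
      GEq m n (α.map Gen.u ++ (Gen.t i :: R)) (Gen.t i :: (α.map Gen.u ++ R)) := by
  intro α
  induction α with
  | nil => intro R; exact GEq.refl' _
  | cons a α' IH =>
    intro R
    have h1 : GEq m n (Gen.u a :: (α'.map Gen.u ++ (Gen.t i :: R)))
        (Gen.u a :: (Gen.t i :: (α'.map Gen.u ++ R))) := GEq.cons (IH R)
    have h2 : GEq m n ([Gen.u a, Gen.t i] ++ (α'.map Gen.u ++ R))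
        ([Gen.t i, Gen.u a] ++ (α'.map Gen.u ++ R)) :=
      GEq.append (GEq.symm' (gcomm i a)) (GEq.refl' _)
    simp only [List.map_cons, List.cons_append]
    exact GEq.trans' h1 (by simpa using h2)

lemma geq_u_past_ts (j : Fin n) :
    ∀ (L : List (Fin m)) (R : List (Gen m n)),
      GEq m n (L.map Gen.t ++ (Gen.u j :: R)) (Gen.u j :: (L.map Gen.t ++ R)) := by
  intro L
  induction L with
  | nil => intro R; exact GEq.refl' _
  | cons a L' IH =>
    intro R
    have h1 : GEq m n (Gen.t a :: (L'.map Gen.t ++ (Gen.u j :: R)))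
        (Gen.t a :: (Gen.u j :: (L'.map Gen.t ++ R))) := GEq.cons (IH R)
    have h2 : GEq m n ([Gen.t a, Gen.u j] ++ (L'.map Gen.t ++ R))
        ([Gen.u j, Gen.t a] ++ (L'.map Gen.t ++ R)) :=
      GEq.append (gcomm a j) (GEq.refl' _)
    simp only [List.map_cons, List.cons_append]
    exact GEq.trans' h1 (by simpa using h2)

lemma geq_us_past_ts :
    ∀ (γ : List (Fin n)) (L : List (Fin m)) (R : List (Gen m n)),
      GEq m n (L.map Gen.t ++ (γ.map Gen.u ++ R)) (γ.map Gen.u ++ (L.map Gen.t ++ R)) := by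
  intro γ
  induction γ with
  | nil => intro L R; exact GEq.refl' _
  | cons c γ' IH =>
    intro L R
    have h1 : GEq m n (L.map Gen.t ++ (Gen.u c :: (γ'.map Gen.u ++ R)))
        (Gen.u c :: (L.map Gen.t ++ (γ'.map Gen.u ++ R))) := geq_u_past_ts c L _
    have h2 := GEq.cons (g := Gen.u c) (IH L R)
    simp only [List.map_cons, List.cons_append]
    exact GEq.trans' h1 h2

lemma exists_map_u {l : List (Gen m n)} (h : ∀ z ∈ l, fT m n z = none) :
    ∃ α : List (Fin n), l = α.map Gen.u := by
  induction l with
  | nil => exact ⟨[], rfl⟩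
  | cons z l' IH =>
    obtain ⟨α', hα'⟩ := IH (fun w hw => h w (List.mem_cons_of_mem _ hw))
    have hz := h z (List.mem_cons_self)
    cases z with
    | s => simp [fT] at hz
    | t i => simp [fT] at hz
    | u j => exact ⟨j :: α', by rw [hα']; rfl⟩

lemma exists_map_t {l : List (Gen m n)} (h : ∀ z ∈ l, fU m n z = none) :
    ∃ L : List (Fin m), l = L.map Gen.t := by
  induction l with
  | nil => exact ⟨[], rfl⟩
  | cons z l' IH =>
    obtain ⟨L', hL'⟩ := IH (fun w hw => h w (List.mem_cons_of_mem _ hw))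
    have hz := h z (List.mem_cons_self)
    cases z with
    | s => simp [fU] at hz
    | u j => simp [fU] at hz
    | t i => exact ⟨i :: L', by rw [hL']; rfl⟩

/-- Trace lemma: words with the same two projections are congruent. -/
theorem trace : ∀ (x y : List (Gen m n)), piT m n x = piT m n y →
    piU m n x = piU m n y → GEq m n x y := by
  intro x
  induction x with
  | nil =>
    intro y h1 h2
    cases y with
    | nil => exact GEq.refl' _
    | cons g ys =>
      exfalso
      cases g with
      | s => simp at h1
      | t i => simp at h1
      | u j => simp at h2
  | cons g x' IH =>
    intro y h1 h2
    cases g with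
    | s =>
      rw [piT_cons_s] at h1
      obtain ⟨l₁, a, l₂, hy, hnone, ha, hl₂⟩ := List.filterMap_eq_cons_iff.1 h1.symm
      have has : a = Gen.s := by
        cases a with
        | s => rfl
        | t i => simp [fT] at ha
        | u j => simp [fT] at ha
      subst has
      obtain ⟨α, hα⟩ := exists_map_u hnone
      subst hα
      rw [piU_cons_s] at h2
      rw [hy, piU_append, piU_map_u, piU_cons_s] at h2
      cases α with
      | cons a₀ α₀ =>
        exfalso
        simp only [List.map_cons, List.cons_append] at h2
        have := congrArg List.head? h2
        simp at this
        exact absurd this (Fin.succ_ne_zero a₀).symm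
      | nil =>
        simp only [List.map_nil, List.nil_append] at h2 hy
        subst hy
        have h2' : piU m n x' = piU m n l₂ := by simpa using h2
        have h1' : piT m n x' = piT m n l₂ := by
          have hl₂' : piT m n l₂ = piT m n x' := hl₂
          exact hl₂'.symm
        exact GEq.cons (IH l₂ h1' h2')
    | t i =>
      rw [piT_cons_t] at h1
      obtain ⟨l₁, a, l₂, hy, hnone, ha, hl₂⟩ := List.filterMap_eq_cons_iff.1 h1.symm
      have hat : a = Gen.t i := by
        cases a with
        | s => simp [fT] at ha; exact absurd ha (Fin.succ_ne_zero i).symm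
        | t i' =>
          simp [fT] at ha
          exact congrArg _ ha
        | u j => simp [fT] at ha
      subst hat
      obtain ⟨α, hα⟩ := exists_map_u hnone
      subst hα
      have hmove : GEq m n y (Gen.t i :: (α.map Gen.u ++ l₂)) := by
        rw [hy]; exact geq_t_past_us i α l₂
      have hl₂' : piT m n l₂ = piT m n x' := hl₂
      have h1' : piT m n x' = piT m n (α.map Gen.u ++ l₂) := by
        rw [piT_append, piT_map_u, List.nil_append, hl₂']
      have h2' : piU m n x' = piU m n (α.map Gen.u ++ l₂) := by
        have h0 : piU m n (Gen.t i :: x') = piU m n x' := piU_cons_t i x'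
        rw [← h0, h2, hy]
        simp
      exact GEq.trans' (GEq.cons (IH _ h1' h2')) (GEq.symm' hmove)
    | u j =>
      rw [piU_cons_u] at h2
      obtain ⟨l₁, a, l₂, hy, hnone, ha, hl₂⟩ := List.filterMap_eq_cons_iff.1 h2.symm
      have hat : a = Gen.u j := by
        cases a with
        | s => simp [fU] at ha; exact absurd ha (Fin.succ_ne_zero j).symm
        | u j' =>
          simp [fU] at ha
          exact congrArg _ ha
        | t i => simp [fU] at ha
      subst hat
      obtain ⟨L, hL⟩ := exists_map_t hnone
      subst hL
      have hmove : GEq m n y (Gen.u j :: (L.map Gen.t ++ l₂)) := by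
        rw [hy]; exact geq_u_past_ts j L l₂
      have hl₂' : piU m n l₂ = piU m n x' := hl₂
      have h2' : piU m n x' = piU m n (L.map Gen.t ++ l₂) := by
        rw [piU_append, piU_map_t, List.nil_append, hl₂']
      have h1' : piT m n x' = piT m n (L.map Gen.t ++ l₂) := by
        have h0 : piT m n (Gen.u j :: x') = piT m n x' := piT_cons_u j x'
        rw [← h0, h1, hy]
        simp
      exact GEq.trans' (GEq.cons (IH _ h1' h2')) (GEq.symm' hmove)

lemma geq_ts_past_us :
    ∀ (L : List (Fin m)) (γ : List (Fin n)) (R : List (Gen m n)),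
      GEq m n (γ.map Gen.u ++ (L.map Gen.t ++ R)) (L.map Gen.t ++ (γ.map Gen.u ++ R)) := by
  intro L
  induction L with
  | nil => intro γ R; exact GEq.refl' _
  | cons c L' IH =>
    intro γ R
    have h1 : GEq m n (γ.map Gen.u ++ (Gen.t c :: (L'.map Gen.t ++ R)))
        (Gen.t c :: (γ.map Gen.u ++ (L'.map Gen.t ++ R))) := geq_t_past_us c γ _
    have h2 := GEq.cons (g := Gen.t c) (IH γ R)
    simp only [List.map_cons, List.cons_append]
    exact GEq.trans' h1 h2

lemma pullU_front :
    ∀ (x : List (Gen m n)) (l : List (Fin m)), piT m n x = l.map Fin.succ →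
      ∃ α : List (Fin n), GEq m n x (α.map Gen.u ++ l.map Gen.t) ∧
        piU m n x = α.map Fin.succ := by
  intro x
  induction x with
  | nil =>
    intro l h
    simp only [piT_nil] at h
    have : l = [] := by
      cases l with
      | nil => rfl
      | cons b l' => simp at h
    subst this
    exact ⟨[], GEq.refl' _, rfl⟩
  | cons g x' IH =>
    intro l h
    cases g with
    | s =>
      exfalso
      rw [piT_cons_s] at h
      cases l with
      | nil => simp at h
      | cons b l' =>
        simp at h
        exact absurd h.1 (Fin.succ_ne_zero b).symm
    | t i =>
      rw [piT_cons_t] at h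
      cases l with
      | nil => simp at h
      | cons b l' =>
        simp only [List.map_cons, List.cons.injEq] at h
        obtain ⟨hb, hl'⟩ := h
        have hbi : b = i := Fin.succ_injective _ hb.symm
        subst hbi
        obtain ⟨α, hα1, hα2⟩ := IH l' hl'
        refine ⟨α, ?_, by simpa using hα2⟩
        have h1 : GEq m n (Gen.t b :: x') (Gen.t b :: (α.map Gen.u ++ l'.map Gen.t)) :=
          GEq.cons hα1
        have h2 : GEq m n (α.map Gen.u ++ (Gen.t b :: l'.map Gen.t))
            (Gen.t b :: (α.map Gen.u ++ l'.map Gen.t)) := geq_t_past_us b α _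
        simp only [List.map_cons]
        exact GEq.trans' h1 (GEq.symm' (by simpa using h2))
    | u j =>
      rw [piT_cons_u] at h
      obtain ⟨α, hα1, hα2⟩ := IH l h
      refine ⟨j :: α, ?_, by simp [hα2]⟩
      simpa using GEq.cons (g := Gen.u j) hα1

lemma pullU_back :
    ∀ (x : List (Gen m n)) (l : List (Fin m)), piT m n x = l.map Fin.succ →
      ∃ α : List (Fin n), GEq m n x (l.map Gen.t ++ α.map Gen.u) ∧
        piU m n x = α.map Fin.succ := by
  intro x
  induction x with
  | nil =>
    intro l h
    simp only [piT_nil] at h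
    have : l = [] := by
      cases l with
      | nil => rfl
      | cons b l' => simp at h
    subst this
    exact ⟨[], GEq.refl' _, rfl⟩
  | cons g x' IH =>
    intro l h
    cases g with
    | s =>
      exfalso
      rw [piT_cons_s] at h
      cases l with
      | nil => simp at h
      | cons b l' =>
        simp at h
        exact absurd h.1 (Fin.succ_ne_zero b).symm
    | t i =>
      rw [piT_cons_t] at h
      cases l with
      | nil => simp at h
      | cons b l' =>
        simp only [List.map_cons, List.cons.injEq] at h
        obtain ⟨hb, hl'⟩ := h
        have hbi : b = i := Fin.succ_injective _ hb.symm
        subst hbi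
        obtain ⟨α, hα1, hα2⟩ := IH l' hl'
        refine ⟨α, ?_, by simpa using hα2⟩
        simp only [List.map_cons, List.cons_append]
        exact GEq.cons hα1
    | u j =>
      rw [piT_cons_u] at h
      obtain ⟨α, hα1, hα2⟩ := IH l h
      refine ⟨j :: α, ?_, by simp [hα2]⟩
      have h1 : GEq m n (Gen.u j :: x') (Gen.u j :: (l.map Gen.t ++ α.map Gen.u)) :=
        GEq.cons hα1
      have h2 : GEq m n (l.map Gen.t ++ (Gen.u j :: α.map Gen.u))
          (Gen.u j :: (l.map Gen.t ++ α.map Gen.u)) := geq_u_past_ts j l _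
      simp only [List.map_cons]
      exact GEq.trans' h1 (GEq.symm' (by simpa using h2))

lemma rot_decompT (k : ℕ) : ∃ l₁ l₂ : List (Fin m),
    (wordT m n).rotate k = l₁.map Gen.t ++ (Gen.s :: l₂.map Gen.t) ∧
    rot (m + 1) k = l₁.map Fin.succ ++ (0 :: l₂.map Fin.succ) := by
  suffices hfirst : ∃ l₁ l₂ : List (Fin m),
      (wordT m n).rotate k = l₁.map Gen.t ++ (Gen.s :: l₂.map Gen.t) by
    obtain ⟨l₁, l₂, h1⟩ := hfirst
    refine ⟨l₁, l₂, h1, ?_⟩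
    have := piT_rotT (m := m) (n := n) k
    rw [h1] at this
    rw [← this]
    simp
  have hlen : (wordT m n).length = m + 1 := length_wordT
  have hj'lt : k % (m + 1) < m + 1 := Nat.mod_lt _ (Nat.succ_pos m)
  have hrw : (wordT m n).rotate k = (wordT m n).rotate (k % (m + 1)) := by
    rw [← hlen, List.rotate_mod]
  rw [hrw]
  cases hk : k % (m + 1) with
  | zero =>
    refine ⟨[], List.finRange m, ?_⟩
    rw [List.rotate_zero, wordT, ofFn_t]
    simp
  | succ d =>
    have hd : d + 1 ≤ (wordT m n).length := by omega
    refine ⟨(List.finRange m).drop d, (List.finRange m).take d, ?_⟩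
    rw [List.rotate_eq_drop_append_take hd]
    have h1 : (wordT m n).drop (d + 1) = ((List.finRange m).drop d).map Gen.t := by
      rw [wordT, ofFn_t]
      simp [List.map_drop]
    have h2 : (wordT m n).take (d + 1) = Gen.s :: ((List.finRange m).take d).map Gen.t := by
      rw [wordT, ofFn_t]
      simp [List.map_take]
    rw [h1, h2]

/-- Core sublemma: a word projecting to a rotation can be rearranged into
`u`-words around a genuine rotated `wordT`. -/
lemma sublemT {xr : List (Gen m n)} {k : ℕ} (h : piT m n xr = rot (m + 1) k) :
    ∃ p q : List (Fin n),
      GEq m n xr ((p.map Gen.u ++ (wordT m n).rotate k) ++ q.map Gen.u) ∧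
      piU m n xr = p.map Fin.succ ++ (0 :: q.map Fin.succ) := by
  obtain ⟨l₁, l₂, hW, hR⟩ := rot_decompT (m := m) (n := n) k
  rw [hR] at h
  obtain ⟨x₁, x₂, hx12, h₁, h₂⟩ := List.filterMap_eq_append_iff.1 h
  obtain ⟨β, a, x₃, hx2, hnone, ha, h₃⟩ := List.filterMap_eq_cons_iff.1 h₂
  have has : a = Gen.s := by
    cases a with
    | s => rfl
    | t i => simp [fT] at ha
    | u j => simp [fT] at ha
  subst has
  obtain ⟨γ, hγ⟩ := exists_map_u hnone
  subst hγ
  obtain ⟨α₁, hα₁, hα₁U⟩ := pullU_front x₁ l₁ h₁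
  obtain ⟨α₂, hα₂, hα₂U⟩ := pullU_back x₃ l₂ h₃
  refine ⟨α₁ ++ γ, α₂, ?_, ?_⟩
  · -- the congruence chain
    have step1 : GEq m n xr
        ((α₁.map Gen.u ++ l₁.map Gen.t) ++ (γ.map Gen.u ++ (Gen.s :: (l₂.map Gen.t ++ α₂.map Gen.u)))) := by
      rw [hx12, hx2]
      exact GEq.append hα₁ (GEq.append (GEq.refl' (γ.map Gen.u)) (GEq.cons hα₂))
    have step2 : GEq m n (l₁.map Gen.t ++ (γ.map Gen.u ++ (Gen.s :: (l₂.map Gen.t ++ α₂.map Gen.u))))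
        (γ.map Gen.u ++ (l₁.map Gen.t ++ (Gen.s :: (l₂.map Gen.t ++ α₂.map Gen.u)))) :=
      geq_us_past_ts γ l₁ _
    have step2' : GEq m n
        ((α₁.map Gen.u ++ l₁.map Gen.t) ++ (γ.map Gen.u ++ (Gen.s :: (l₂.map Gen.t ++ α₂.map Gen.u))))
        (α₁.map Gen.u ++ (γ.map Gen.u ++ (l₁.map Gen.t ++ (Gen.s :: (l₂.map Gen.t ++ α₂.map Gen.u))))) := by
      have := GEq.append (GEq.refl' (α₁.map Gen.u)) step2
      simpa [List.append_assoc] using this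
    have hfin : α₁.map Gen.u ++ (γ.map Gen.u ++ (l₁.map Gen.t ++ (Gen.s :: (l₂.map Gen.t ++ α₂.map Gen.u))))
        = (((α₁ ++ γ).map Gen.u ++ (wordT m n).rotate k) ++ α₂.map Gen.u) := by
      rw [hW]
      simp [List.append_assoc]
    exact GEq.trans' step1 (by rw [← hfin]; exact step2')
  · rw [hx12, hx2]
    simp [hα₁U, hα₂U]

/-- Lifting one rewriting step along the `T`-projection. -/
lemma liftstepT {w w' : List (Fin (m + 1))} (hs : StepA (m + 1) w w') :
    ∀ x : List (Gen m n), piT m n x = w →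
      ∃ x', GEq m n x x' ∧ piT m n x' = w' ∧ piU m n x' = piU m n x := by
  obtain ⟨A, B, i, j, hw, hw'⟩ := hs
  intro x hx
  rw [hw] at hx
  obtain ⟨xa, xrest, hxsplit, hA, hrest⟩ := List.filterMap_eq_append_iff.1 hx
  obtain ⟨xr, xb, hxsplit2, hrot, hB⟩ := List.filterMap_eq_append_iff.1 hrest
  obtain ⟨p, q, hcong, hU⟩ := sublemT (xr := xr) (k := i) hrot
  refine ⟨xa ++ (((p.map Gen.u ++ (wordT m n).rotate j) ++ q.map Gen.u) ++ xb), ?_, ?_, ?_⟩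
  · rw [hxsplit, hxsplit2]
    refine GEq.append (GEq.refl' xa) (GEq.append ?_ (GEq.refl' xb))
    refine GEq.trans' hcong ?_
    exact GEq.append (GEq.append (GEq.refl' _) (grotT i j)) (GEq.refl' _)
  · rw [hw']
    have h1 : piT m n ((wordT m n).rotate j) = rot (m + 1) j := piT_rotT j
    simp [hA, hB, piT]
    have hp : ∀ l : List (Fin n), l.filterMap (fun x => fT m n (Gen.u x)) = [] := fun l => by
      induction l <;> simp [fT, List.filterMap_cons, *]
    rw [hp p, hp q]; simp only [List.nil_append]
    exact congrArg (· ++ B) h1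
  · rw [hxsplit, hxsplit2]
    have h2 : piU m n ((wordT m n).rotate j) = [0] := piU_rotT j
    simp [hU, h2]

/-- Lifting a full `AEq`-chain along the `T`-projection. -/
theorem liftT {w w' : List (Fin (m + 1))} (h : AEq (m + 1) w w') :
    ∀ x : List (Gen m n), piT m n x = w →
      ∃ x', GEq m n x x' ∧ piT m n x' = w' ∧ piU m n x' = piU m n x := by
  have key : ∀ a b : List (Fin (m + 1)), AEq (m + 1) a b →
      (∀ x : List (Gen m n), piT m n x = a →
        ∃ x', GEq m n x x' ∧ piT m n x' = b ∧ piU m n x' = piU m n x) ∧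
      (∀ x : List (Gen m n), piT m n x = b →
        ∃ x', GEq m n x x' ∧ piT m n x' = a ∧ piU m n x' = piU m n x) := by
    intro a b hab
    induction hab with
    | rel c d hs => exact ⟨liftstepT hs, liftstepT hs.symm'⟩
    | refl c => exact ⟨fun x hx => ⟨x, GEq.refl' _, hx, rfl⟩,
        fun x hx => ⟨x, GEq.refl' _, hx, rfl⟩⟩
    | symm c d _ ih => exact ⟨ih.2, ih.1⟩
    | trans c d e _ _ ih1 ih2 =>
      constructor
      · intro x hx
        obtain ⟨x₁, g1, p1, u1⟩ := ih1.1 x hx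
        obtain ⟨x₂, g2, p2, u2⟩ := ih2.1 x₁ p1
        exact ⟨x₂, GEq.trans' g1 g2, p2, u2.trans u1⟩
      · intro x hx
        obtain ⟨x₁, g1, p1, u1⟩ := ih2.2 x hx
        obtain ⟨x₂, g2, p2, u2⟩ := ih1.2 x₁ p1
        exact ⟨x₂, GEq.trans' g1 g2, p2, u2.trans u1⟩
  exact (key w w' h).1

lemma pullT_front :
    ∀ (x : List (Gen m n)) (l : List (Fin n)), piU m n x = l.map Fin.succ →
      ∃ α : List (Fin m), GEq m n x (α.map Gen.t ++ l.map Gen.u) ∧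
        piT m n x = α.map Fin.succ := by
  intro x
  induction x with
  | nil =>
    intro l h
    simp only [piU_nil] at h
    have : l = [] := by
      cases l with
      | nil => rfl
      | cons b l' => simp at h
    subst this
    exact ⟨[], GEq.refl' _, rfl⟩
  | cons g x' IH =>
    intro l h
    cases g with
    | s =>
      exfalso
      rw [piU_cons_s] at h
      cases l with
      | nil => simp at h
      | cons b l' =>
        simp at h
        exact absurd h.1 (Fin.succ_ne_zero b).symm
    | u j =>
      rw [piU_cons_u] at h
      cases l with
      | nil => simp at h
      | cons b l' =>
        simp only [List.map_cons, List.cons.injEq] at h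
        obtain ⟨hb, hl'⟩ := h
        have hbi : b = j := Fin.succ_injective _ hb.symm
        subst hbi
        obtain ⟨α, hα1, hα2⟩ := IH l' hl'
        refine ⟨α, ?_, by simpa using hα2⟩
        have h1 : GEq m n (Gen.u b :: x') (Gen.u b :: (α.map Gen.t ++ l'.map Gen.u)) :=
          GEq.cons hα1
        have h2 : GEq m n (α.map Gen.t ++ (Gen.u b :: l'.map Gen.u))
            (Gen.u b :: (α.map Gen.t ++ l'.map Gen.u)) := geq_u_past_ts b α _
        simp only [List.map_cons]
        exact GEq.trans' h1 (GEq.symm' (by simpa using h2))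
    | t i =>
      rw [piU_cons_t] at h
      obtain ⟨α, hα1, hα2⟩ := IH l h
      refine ⟨i :: α, ?_, by simp [hα2]⟩
      simpa using GEq.cons (g := Gen.t i) hα1

lemma pullT_back :
    ∀ (x : List (Gen m n)) (l : List (Fin n)), piU m n x = l.map Fin.succ →
      ∃ α : List (Fin m), GEq m n x (l.map Gen.u ++ α.map Gen.t) ∧
        piT m n x = α.map Fin.succ := by
  intro x
  induction x with
  | nil =>
    intro l h
    simp only [piU_nil] at h
    have : l = [] := by
      cases l with
      | nil => rfl
      | cons b l' => simp at h
    subst this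
    exact ⟨[], GEq.refl' _, rfl⟩
  | cons g x' IH =>
    intro l h
    cases g with
    | s =>
      exfalso
      rw [piU_cons_s] at h
      cases l with
      | nil => simp at h
      | cons b l' =>
        simp at h
        exact absurd h.1 (Fin.succ_ne_zero b).symm
    | u j =>
      rw [piU_cons_u] at h
      cases l with
      | nil => simp at h
      | cons b l' =>
        simp only [List.map_cons, List.cons.injEq] at h
        obtain ⟨hb, hl'⟩ := h
        have hbi : b = j := Fin.succ_injective _ hb.symm
        subst hbi
        obtain ⟨α, hα1, hα2⟩ := IH l' hl'
        refine ⟨α, ?_, by simpa using hα2⟩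
        simp only [List.map_cons, List.cons_append]
        exact GEq.cons hα1
    | t i =>
      rw [piU_cons_t] at h
      obtain ⟨α, hα1, hα2⟩ := IH l h
      refine ⟨i :: α, ?_, by simp [hα2]⟩
      have h1 : GEq m n (Gen.t i :: x') (Gen.t i :: (l.map Gen.u ++ α.map Gen.t)) :=
        GEq.cons hα1
      have h2 : GEq m n (l.map Gen.u ++ (Gen.t i :: α.map Gen.t))
          (Gen.t i :: (l.map Gen.u ++ α.map Gen.t)) := geq_t_past_us i l _
      simp only [List.map_cons]
      exact GEq.trans' h1 (GEq.symm' (by simpa using h2))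

lemma rot_decompU (k : ℕ) : ∃ l₁ l₂ : List (Fin n),
    (wordU m n).rotate k = l₁.map Gen.u ++ (Gen.s :: l₂.map Gen.u) ∧
    rot (n + 1) k = l₁.map Fin.succ ++ (0 :: l₂.map Fin.succ) := by
  suffices hfirst : ∃ l₁ l₂ : List (Fin n),
      (wordU m n).rotate k = l₁.map Gen.u ++ (Gen.s :: l₂.map Gen.u) by
    obtain ⟨l₁, l₂, h1⟩ := hfirst
    refine ⟨l₁, l₂, h1, ?_⟩
    have := piU_rotU (m := m) (n := n) k
    rw [h1] at this
    rw [← this]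
    simp
  have hlen : (wordU m n).length = n + 1 := length_wordU
  have hj'lt : k % (n + 1) < n + 1 := Nat.mod_lt _ (Nat.succ_pos n)
  have hrw : (wordU m n).rotate k = (wordU m n).rotate (k % (n + 1)) := by
    rw [← hlen, List.rotate_mod]
  rw [hrw]
  cases hk : k % (n + 1) with
  | zero =>
    refine ⟨[], List.finRange n, ?_⟩
    rw [List.rotate_zero, wordU, ofFn_u]
    simp
  | succ d =>
    have hd : d + 1 ≤ (wordU m n).length := by omega
    refine ⟨(List.finRange n).drop d, (List.finRange n).take d, ?_⟩
    rw [List.rotate_eq_drop_append_take hd]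
    have h1 : (wordU m n).drop (d + 1) = ((List.finRange n).drop d).map Gen.u := by
      rw [wordU, ofFn_u]
      simp [List.map_drop]
    have h2 : (wordU m n).take (d + 1) = Gen.s :: ((List.finRange n).take d).map Gen.u := by
      rw [wordU, ofFn_u]
      simp [List.map_take]
    rw [h1, h2]

/-- Core sublemma: a word projecting to a rotation can be rearranged into
`u`-words around a genuine rotated `wordU`. -/
lemma sublemU {xr : List (Gen m n)} {k : ℕ} (h : piU m n xr = rot (n + 1) k) :
    ∃ p q : List (Fin m),
      GEq m n xr ((p.map Gen.t ++ (wordU m n).rotate k) ++ q.map Gen.t) ∧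
      piT m n xr = p.map Fin.succ ++ (0 :: q.map Fin.succ) := by
  obtain ⟨l₁, l₂, hW, hR⟩ := rot_decompU (m := m) (n := n) k
  rw [hR] at h
  obtain ⟨x₁, x₂, hx12, h₁, h₂⟩ := List.filterMap_eq_append_iff.1 h
  obtain ⟨β, a, x₃, hx2, hnone, ha, h₃⟩ := List.filterMap_eq_cons_iff.1 h₂
  have has : a = Gen.s := by
    cases a with
    | s => rfl
    | u j => simp [fU] at ha
    | t i => simp [fU] at ha
  subst has
  obtain ⟨γ, hγ⟩ := exists_map_t hnone
  subst hγ
  obtain ⟨α₁, hα₁, hα₁U⟩ := pullT_front x₁ l₁ h₁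
  obtain ⟨α₂, hα₂, hα₂U⟩ := pullT_back x₃ l₂ h₃
  refine ⟨α₁ ++ γ, α₂, ?_, ?_⟩
  · -- the congruence chain
    have step1 : GEq m n xr
        ((α₁.map Gen.t ++ l₁.map Gen.u) ++ (γ.map Gen.t ++ (Gen.s :: (l₂.map Gen.u ++ α₂.map Gen.t)))) := by
      rw [hx12, hx2]
      exact GEq.append hα₁ (GEq.append (GEq.refl' (γ.map Gen.t)) (GEq.cons hα₂))
    have step2 : GEq m n (l₁.map Gen.u ++ (γ.map Gen.t ++ (Gen.s :: (l₂.map Gen.u ++ α₂.map Gen.t))))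
        (γ.map Gen.t ++ (l₁.map Gen.u ++ (Gen.s :: (l₂.map Gen.u ++ α₂.map Gen.t)))) :=
      geq_ts_past_us γ l₁ _
    have step2' : GEq m n
        ((α₁.map Gen.t ++ l₁.map Gen.u) ++ (γ.map Gen.t ++ (Gen.s :: (l₂.map Gen.u ++ α₂.map Gen.t))))
        (α₁.map Gen.t ++ (γ.map Gen.t ++ (l₁.map Gen.u ++ (Gen.s :: (l₂.map Gen.u ++ α₂.map Gen.t))))) := by
      have := GEq.append (GEq.refl' (α₁.map Gen.t)) step2
      simpa [List.append_assoc] using this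
    have hfin : α₁.map Gen.t ++ (γ.map Gen.t ++ (l₁.map Gen.u ++ (Gen.s :: (l₂.map Gen.u ++ α₂.map Gen.t))))
        = (((α₁ ++ γ).map Gen.t ++ (wordU m n).rotate k) ++ α₂.map Gen.t) := by
      rw [hW]
      simp [List.append_assoc]
    exact GEq.trans' step1 (by rw [← hfin]; exact step2')
  · rw [hx12, hx2]
    simp [hα₁U, hα₂U]

/-- Lifting one rewriting step along the `T`-projection. -/
lemma liftstepU {w w' : List (Fin (n + 1))} (hs : StepA (n + 1) w w') :
    ∀ x : List (Gen m n), piU m n x = w →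
      ∃ x', GEq m n x x' ∧ piU m n x' = w' ∧ piT m n x' = piT m n x := by
  obtain ⟨A, B, i, j, hw, hw'⟩ := hs
  intro x hx
  rw [hw] at hx
  obtain ⟨xa, xrest, hxsplit, hA, hrest⟩ := List.filterMap_eq_append_iff.1 hx
  obtain ⟨xr, xb, hxsplit2, hrot, hB⟩ := List.filterMap_eq_append_iff.1 hrest
  obtain ⟨p, q, hcong, hU⟩ := sublemU (xr := xr) (k := i) hrot
  refine ⟨xa ++ (((p.map Gen.t ++ (wordU m n).rotate j) ++ q.map Gen.t) ++ xb), ?_, ?_, ?_⟩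
  · rw [hxsplit, hxsplit2]
    refine GEq.append (GEq.refl' xa) (GEq.append ?_ (GEq.refl' xb))
    refine GEq.trans' hcong ?_
    exact GEq.append (GEq.append (GEq.refl' _) (grotU i j)) (GEq.refl' _)
  · rw [hw']
    have h1 : piU m n ((wordU m n).rotate j) = rot (n + 1) j := piU_rotU j
    simp [hA, hB, piU]
    have hp : ∀ l : List (Fin m), l.filterMap (fun x => fU m n (Gen.t x)) = [] := fun l => by
      induction l <;> simp [fU, List.filterMap_cons, *]
    rw [hp p, hp q]; simp only [List.nil_append]
    exact congrArg (· ++ B) h1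
  · rw [hxsplit, hxsplit2]
    have h2 : piT m n ((wordU m n).rotate j) = [0] := piT_rotU j
    simp [hU, h2]

/-- Lifting a full `AEq`-chain along the `T`-projection. -/
theorem liftU {w w' : List (Fin (n + 1))} (h : AEq (n + 1) w w') :
    ∀ x : List (Gen m n), piU m n x = w →
      ∃ x', GEq m n x x' ∧ piU m n x' = w' ∧ piT m n x' = piT m n x := by
  have key : ∀ a b : List (Fin (n + 1)), AEq (n + 1) a b →
      (∀ x : List (Gen m n), piU m n x = a →
        ∃ x', GEq m n x x' ∧ piU m n x' = b ∧ piT m n x' = piT m n x) ∧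
      (∀ x : List (Gen m n), piU m n x = b →
        ∃ x', GEq m n x x' ∧ piU m n x' = a ∧ piT m n x' = piT m n x) := by
    intro a b hab
    induction hab with
    | rel c d hs => exact ⟨liftstepU hs, liftstepU hs.symm'⟩
    | refl c => exact ⟨fun x hx => ⟨x, GEq.refl' _, hx, rfl⟩,
        fun x hx => ⟨x, GEq.refl' _, hx, rfl⟩⟩
    | symm c d _ ih => exact ⟨ih.2, ih.1⟩
    | trans c d e _ _ ih1 ih2 =>
      constructor
      · intro x hx
        obtain ⟨x₁, g1, p1, u1⟩ := ih1.1 x hx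
        obtain ⟨x₂, g2, p2, u2⟩ := ih2.1 x₁ p1
        exact ⟨x₂, GEq.trans' g1 g2, p2, u2.trans u1⟩
      · intro x hx
        obtain ⟨x₁, g1, p1, u1⟩ := ih2.2 x hx
        obtain ⟨x₂, g2, p2, u2⟩ := ih1.2 x₁ p1
        exact ⟨x₂, GEq.trans' g1 g2, p2, u2.trans u1⟩
  exact (key w w' h).1

/-- Injectivity of the pair of projections. -/
theorem proj_inj {x y : List (Gen m n)}
    (h1 : AEq (m + 1) (piT m n x) (piT m n y))
    (h2 : AEq (n + 1) (piU m n x) (piU m n y)) : GEq m n x y := by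
  obtain ⟨x₁, g1, p1, u1⟩ := liftT h1 x rfl
  have h2' : AEq (n + 1) (piU m n x₁) (piU m n y) := by rw [u1]; exact h2
  obtain ⟨x₂, g2, p2, u2⟩ := liftU h2' x₁ rfl
  have p2' : piT m n x₂ = piT m n y := by rw [u2, p1]
  exact GEq.trans' g1 (GEq.trans' g2 (trace x₂ y p2' p2))

/-- Word-level cancellation of `Δ`. -/
theorem delta_cancel_word {x y : List (Gen m n)}
    (h : GEq m n (wordFull m n ++ x) (wordFull m n ++ y)) : GEq m n x y := by
  have hT := geq_aeqT h
  have hU := geq_aeqU h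
  rw [piT_append, piT_append, piT_wordFull] at hT
  rw [piU_append, piU_append, piU_wordFull] at hU
  exact proj_inj (rot0_cancel (Nat.succ_pos m) hT) (rot0_cancel (Nat.succ_pos n) hU)

/-- Image of a word in `G⁺_{m,n}`. -/
def mkw (l : List (Gen m n)) : GP m n := PresentedMonoid.mk (Rel m n) (FreeMonoid.ofList l)

lemma mkw_mul (a b : List (Gen m n)) : mkw a * mkw b = mkw (a ++ b) := by
  unfold mkw
  rw [FreeMonoid.ofList_append, map_mul]

lemma mkw_eq_of_geq {a b : List (Gen m n)} (h : GEq m n a b) : mkw a = mkw b :=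
  Quotient.sound h

lemma gen_eq_mkw (v : Gen m n) : gen v = mkw [v] := rfl

lemma Delta_eq_mkw : Delta m n = mkw (wordFull m n) := rfl

/-- Cancellation of `Δ` in `G⁺_{m,n}`. -/
theorem Delta_cancel {X Y : GP m n} (h : Delta m n * X = Delta m n * Y) : X = Y := by
  obtain ⟨x, rfl⟩ := PresentedMonoid.surjective_mk X
  obtain ⟨y, rfl⟩ := PresentedMonoid.surjective_mk Y
  have hx : PresentedMonoid.mk (Rel m n) x = mkw x.toList := by
    unfold mkw
    rw [FreeMonoid.ofList_toList]
  rw [hx] at h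
  have hy : PresentedMonoid.mk (Rel m n) y = mkw y.toList := by
    unfold mkw
    rw [FreeMonoid.ofList_toList]
  rw [hy] at h
  rw [Delta_eq_mkw, mkw_mul, mkw_mul] at h
  have h' : GEq m n (wordFull m n ++ x.toList) (wordFull m n ++ y.toList) :=
    Quotient.exact h
  have := delta_cancel_word h'
  rw [hx, hy]
  exact mkw_eq_of_geq this

lemma geq_Uw_s : GEq m n ((List.ofFn (fun j : Fin n => Gen.u j)) ++ [Gen.s])
    (Gen.s :: List.ofFn (fun j : Fin n => Gen.u j)) := by
  have h1 : (wordU m n).rotate 1 = (List.ofFn (fun j : Fin n => Gen.u j)) ++ [Gen.s] := by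
    rw [wordU, List.rotate_cons_succ, List.rotate_zero]
  have := grotU (m := m) (n := n) 1 0
  rw [h1, List.rotate_zero, wordU] at this
  exact this

lemma geq_Tw_s : GEq m n ((List.ofFn (fun i : Fin m => Gen.t i)) ++ [Gen.s])
    (Gen.s :: List.ofFn (fun i : Fin m => Gen.t i)) := by
  have h1 : (wordT m n).rotate 1 = (List.ofFn (fun i : Fin m => Gen.t i)) ++ [Gen.s] := by
    rw [wordT, List.rotate_cons_succ, List.rotate_zero]
  have := grotT (m := m) (n := n) 1 0
  rw [h1, List.rotate_zero, wordT] at this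
  exact this

lemma geq_TU_comm : GEq m n
    ((List.ofFn (fun j : Fin n => Gen.u j)) ++ List.ofFn (fun i : Fin m => Gen.t i))
    ((List.ofFn (fun i : Fin m => Gen.t i)) ++ List.ofFn (fun j : Fin n => Gen.u j)) := by
  have := geq_ts_past_us (m := m) (n := n) (List.finRange m) (List.finRange n) []
  rw [← ofFn_t, ← ofFn_u] at this
  simpa using this

/-- `z · s = Δ`. -/
lemma z_s_word : GEq m n
    ((List.ofFn (fun i : Fin m => Gen.t i) ++ List.ofFn (fun j : Fin n => Gen.u j)) ++ [Gen.s])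
    (wordFull m n) := by
  set Tw := List.ofFn (fun i : Fin m => Gen.t i) with hTw
  set Uw := List.ofFn (fun j : Fin n => Gen.u j) with hUw
  have h1 : GEq m n (Tw ++ (Uw ++ [Gen.s])) (Tw ++ (Gen.s :: Uw)) :=
    GEq.append (GEq.refl' Tw) geq_Uw_s
  have h2 : GEq m n ((Tw ++ [Gen.s]) ++ Uw) ((Gen.s :: Tw) ++ Uw) :=
    GEq.append geq_Tw_s (GEq.refl' Uw)
  have e1 : (Tw ++ Uw) ++ [Gen.s] = Tw ++ (Uw ++ [Gen.s]) := by simp [List.append_assoc]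
  have e2 : Tw ++ (Gen.s :: Uw) = (Tw ++ [Gen.s]) ++ Uw := by simp
  have e3 : (Gen.s :: Tw) ++ Uw = wordFull m n := by rw [wordFull]; simp; rfl
  rw [e1, ← e3]
  exact GEq.trans' h1 (by rw [e2]; exact h2)

/-- rotation of `wordT` ending in `t i`. -/
lemma rotT_last (i : Fin m) :
    (wordT m n).rotate (i.val + 2) =
      (((List.finRange m).drop (i.val + 1)).map Gen.t ++
        (Gen.s :: ((List.finRange m).take i.val).map Gen.t)) ++ [Gen.t i] := by
  have hle : i.val + 2 ≤ (wordT m n).length := by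
    rw [length_wordT]; have := i.isLt; omega
  rw [List.rotate_eq_drop_append_take hle]
  have h1 : (wordT m n).drop (i.val + 2) = ((List.finRange m).drop (i.val + 1)).map Gen.t := by
    rw [wordT, ofFn_t]
    simp [List.map_drop]
  have h2 : (wordT m n).take (i.val + 2) =
      Gen.s :: ((List.finRange m).take (i.val + 1)).map Gen.t := by
    rw [wordT, ofFn_t]
    simp [List.map_take]
  have h3 : (List.finRange m).take (i.val + 1) = (List.finRange m).take i.val ++ [i] := by
    rw [List.take_succ]
    congr 1
    have hlt : i.val < (List.finRange m).length := by simp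
    rw [List.getElem?_eq_getElem hlt]
    simp
  rw [h1, h2, h3]
  simp [List.append_assoc]

lemma rotU_last (j : Fin n) :
    (wordU m n).rotate (j.val + 2) =
      (((List.finRange n).drop (j.val + 1)).map Gen.u ++
        (Gen.s :: ((List.finRange n).take j.val).map Gen.u)) ++ [Gen.u j] := by
  have hle : j.val + 2 ≤ (wordU m n).length := by
    rw [length_wordU]; have := j.isLt; omega
  rw [List.rotate_eq_drop_append_take hle]
  have h1 : (wordU m n).drop (j.val + 2) = ((List.finRange n).drop (j.val + 1)).map Gen.u := by
    rw [wordU, ofFn_u]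
    simp [List.map_drop]
  have h2 : (wordU m n).take (j.val + 2) =
      Gen.s :: ((List.finRange n).take (j.val + 1)).map Gen.u := by
    rw [wordU, ofFn_u]
    simp [List.map_take]
  have h3 : (List.finRange n).take (j.val + 1) = (List.finRange n).take j.val ++ [j] := by
    rw [List.take_succ]
    congr 1
    have hlt : j.val < (List.finRange n).length := by simp
    rw [List.getElem?_eq_getElem hlt]
    simp
  rw [h1, h2, h3]
  simp [List.append_assoc]

/-- `z · t i = Δ` at word level. -/
lemma z_t_word (i : Fin m) : GEq m n
    ((List.ofFn (fun j : Fin n => Gen.u j) ++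
      (((List.finRange m).drop (i.val + 1)).map Gen.t ++
        (Gen.s :: ((List.finRange m).take i.val).map Gen.t))) ++ [Gen.t i])
    (wordFull m n) := by
  set Tw := List.ofFn (fun i : Fin m => Gen.t i) with hTw
  set Uw := List.ofFn (fun j : Fin n => Gen.u j) with hUw
  have e1 : (Uw ++ (((List.finRange m).drop (i.val + 1)).map Gen.t ++
      (Gen.s :: ((List.finRange m).take i.val).map Gen.t))) ++ [Gen.t i]
      = Uw ++ (wordT m n).rotate (i.val + 2) := by
    rw [rotT_last]
    simp [List.append_assoc]
  rw [e1]
  have h1 : GEq m n (Uw ++ (wordT m n).rotate (i.val + 2)) (Uw ++ wordT m n) :=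
    GEq.append (GEq.refl' Uw) (by
      have := grotT (m := m) (n := n) (i.val + 2) 0
      rwa [List.rotate_zero] at this)
  have e2 : Uw ++ wordT m n = (Uw ++ [Gen.s]) ++ Tw := by
    rw [wordT]; simp [List.append_assoc]; rfl
  have h2 : GEq m n ((Uw ++ [Gen.s]) ++ Tw) ((Gen.s :: Uw) ++ Tw) :=
    GEq.append geq_Uw_s (GEq.refl' Tw)
  have h3 : GEq m n (Gen.s :: (Uw ++ Tw)) (Gen.s :: (Tw ++ Uw)) :=
    GEq.cons geq_TU_comm
  have e3 : (Gen.s :: Uw) ++ Tw = Gen.s :: (Uw ++ Tw) := by simp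
  have e4 : Gen.s :: (Tw ++ Uw) = wordFull m n := by rw [wordFull]
  exact GEq.trans' h1 (by rw [e2, ← e4]; exact GEq.trans' h2 (by rw [e3]; exact h3))

/-- `z · u j = Δ` at word level. -/
lemma z_u_word (j : Fin n) : GEq m n
    ((List.ofFn (fun i : Fin m => Gen.t i) ++
      (((List.finRange n).drop (j.val + 1)).map Gen.u ++
        (Gen.s :: ((List.finRange n).take j.val).map Gen.u))) ++ [Gen.u j])
    (wordFull m n) := by
  set Tw := List.ofFn (fun i : Fin m => Gen.t i) with hTw
  set Uw := List.ofFn (fun j : Fin n => Gen.u j) with hUw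
  have e1 : (Tw ++ (((List.finRange n).drop (j.val + 1)).map Gen.u ++
      (Gen.s :: ((List.finRange n).take j.val).map Gen.u))) ++ [Gen.u j]
      = Tw ++ (wordU m n).rotate (j.val + 2) := by
    rw [rotU_last]
    simp [List.append_assoc]
  rw [e1]
  have h1 : GEq m n (Tw ++ (wordU m n).rotate (j.val + 2)) (Tw ++ wordU m n) :=
    GEq.append (GEq.refl' Tw) (by
      have := grotU (m := m) (n := n) (j.val + 2) 0
      rwa [List.rotate_zero] at this)
  have e2 : Tw ++ wordU m n = (Tw ++ [Gen.s]) ++ Uw := by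
    rw [wordU]; simp [List.append_assoc]; rfl
  have h2 : GEq m n ((Tw ++ [Gen.s]) ++ Uw) ((Gen.s :: Tw) ++ Uw) :=
    GEq.append geq_Tw_s (GEq.refl' Uw)
  have e4 : (Gen.s :: Tw) ++ Uw = wordFull m n := by rw [wordFull]; simp; rfl
  exact GEq.trans' h1 (by rw [e2, ← e4]; exact h2)

/-- Every generator has a left complement to `Δ`. -/
lemma exists_z (v : Gen m n) : ∃ z : GP m n, z * gen v = Delta m n := by
  cases v with
  | s =>
    refine ⟨mkw (List.ofFn (fun i : Fin m => Gen.t i) ++ List.ofFn (fun j : Fin n => Gen.u j)), ?_⟩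
    rw [gen_eq_mkw, mkw_mul, Delta_eq_mkw]
    exact mkw_eq_of_geq z_s_word
  | t i =>
    refine ⟨mkw (List.ofFn (fun j : Fin n => Gen.u j) ++
      (((List.finRange m).drop (i.val + 1)).map Gen.t ++
        (Gen.s :: ((List.finRange m).take i.val).map Gen.t))), ?_⟩
    rw [gen_eq_mkw, mkw_mul, Delta_eq_mkw]
    exact mkw_eq_of_geq (z_t_word i)
  | u j =>
    refine ⟨mkw (List.ofFn (fun i : Fin m => Gen.t i) ++
      (((List.finRange n).drop (j.val + 1)).map Gen.u ++
        (Gen.s :: ((List.finRange n).take j.val).map Gen.u))), ?_⟩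
    rw [gen_eq_mkw, mkw_mul, Delta_eq_mkw]
    exact mkw_eq_of_geq (z_u_word j)


/-- For all `m, n ≥ 1`, every generator `v` of `G⁺_{m,n}` is left cancellable:
`v·X = v·Y` implies `X = Y`. -/
theorem gen_left_cancel (m n : ℕ) (hm : 1 ≤ m) (hn : 1 ≤ n) :
    ∀ v : Gen m n, ∀ X Y : GP m n, gen v * X = gen v * Y → X = Y := by
  intro v X Y h
  obtain ⟨z, hz⟩ := exists_z v
  apply Delta_cancel (m := m) (n := n)
  rw [← hz, mul_assoc, mul_assoc, h]

end Gmn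
end

section
/- For all integers m, n ≥ 1, for all indices 1 ≤ i ≤ m and 1 ≤ j ≤ n and all elements X, Y of the monoid G⁺_{m,n}: if t_i·X = u_j·Y in G⁺_{m,n}, then there exists Z ∈ G⁺_{m,n} with X = u_j·Z and Y = t_i·Z. -/
namespace Gmn
-- ## auxiliary defs
variable {m n : ℕ}

/-- letter classifiers -/
def isS : Gen m n → Bool | .s => true | _ => false
def isT : Gen m n → Bool | .t _ => true | _ => false
def isU : Gen m n → Bool | .u _ => true | _ => false

@[simp] lemma isS_s : isS (Gen.s : Gen m n) = true := rfl
@[simp] lemma isS_t (i : Fin m) : isS (Gen.t i : Gen m n) = false := rfl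
@[simp] lemma isS_u (j : Fin n) : isS (Gen.u j : Gen m n) = false := rfl
@[simp] lemma isT_s : isT (Gen.s : Gen m n) = false := rfl
@[simp] lemma isT_t (i : Fin m) : isT (Gen.t i : Gen m n) = true := rfl
@[simp] lemma isT_u (j : Fin n) : isT (Gen.u j : Gen m n) = false := rfl
@[simp] lemma isU_s : isU (Gen.s : Gen m n) = false := rfl
@[simp] lemma isU_t (i : Fin m) : isU (Gen.t i : Gen m n) = false := rfl
@[simp] lemma isU_u (j : Fin n) : isU (Gen.u j : Gen m n) = true := rfl

/-- projection keeping `s` and `t`s -/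
def pT (l : List (Gen m n)) : List (Gen m n) := l.filter (fun g => !isU g)
/-- projection keeping `s` and `u`s -/
def pU (l : List (Gen m n)) : List (Gen m n) := l.filter (fun g => !isT g)

@[simp] lemma pT_nil : pT ([] : List (Gen m n)) = [] := rfl
@[simp] lemma pU_nil : pU ([] : List (Gen m n)) = [] := rfl
@[simp] lemma pT_append (a b : List (Gen m n)) : pT (a ++ b) = pT a ++ pT b :=
  List.filter_append ..
@[simp] lemma pU_append (a b : List (Gen m n)) : pU (a ++ b) = pU a ++ pU b :=
  List.filter_append ..
@[simp] lemma pT_cons_s (l : List (Gen m n)) : pT (Gen.s :: l) = Gen.s :: pT l := rfl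
@[simp] lemma pT_cons_t (i : Fin m) (l : List (Gen m n)) : pT (Gen.t i :: l) = Gen.t i :: pT l := rfl
@[simp] lemma pT_cons_u (j : Fin n) (l : List (Gen m n)) : pT (Gen.u j :: l) = pT l := rfl
@[simp] lemma pU_cons_s (l : List (Gen m n)) : pU (Gen.s :: l) = Gen.s :: pU l := rfl
@[simp] lemma pU_cons_t (i : Fin m) (l : List (Gen m n)) : pU (Gen.t i :: l) = pU l := rfl
@[simp] lemma pU_cons_u (j : Fin n) (l : List (Gen m n)) : pU (Gen.u j :: l) = Gen.u j :: pU l := rfl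

/-- the main congruence at the level of words -/
def cg (m n : ℕ) (a b : List (Gen m n)) : Prop :=
  ConGen.Rel (Rel m n) (FreeMonoid.ofList a) (FreeMonoid.ofList b)

/-- rotation-only relations -/
def RT (m n : ℕ) : FreeMonoid (Gen m n) → FreeMonoid (Gen m n) → Prop := fun a b =>
  ∃ j, a = FreeMonoid.ofList (wordT m n) ∧ b = FreeMonoid.ofList ((wordT m n).rotate j)
def RU (m n : ℕ) : FreeMonoid (Gen m n) → FreeMonoid (Gen m n) → Prop := fun a b =>
  ∃ j, a = FreeMonoid.ofList (wordU m n) ∧ b = FreeMonoid.ofList ((wordU m n).rotate j)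

def cgT (m n : ℕ) (a b : List (Gen m n)) : Prop :=
  ConGen.Rel (RT m n) (FreeMonoid.ofList a) (FreeMonoid.ofList b)
def cgU (m n : ℕ) (a b : List (Gen m n)) : Prop :=
  ConGen.Rel (RU m n) (FreeMonoid.ofList a) (FreeMonoid.ofList b)

lemma cg_refl (a : List (Gen m n)) : cg m n a a := ConGen.Rel.refl _
lemma cg_symm {a b : List (Gen m n)} (h : cg m n a b) : cg m n b a := ConGen.Rel.symm h
lemma cg_trans {a b c : List (Gen m n)} (h : cg m n a b) (h' : cg m n b c) : cg m n a c :=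
  ConGen.Rel.trans h h'
lemma cg_append {a b c d : List (Gen m n)} (h : cg m n a b) (h' : cg m n c d) :
    cg m n (a ++ c) (b ++ d) := by
  have := ConGen.Rel.mul h h'
  simpa [cg, FreeMonoid.ofList_append] using this
lemma cg_append_left (c : List (Gen m n)) {a b : List (Gen m n)} (h : cg m n a b) :
    cg m n (c ++ a) (c ++ b) := cg_append (cg_refl c) h
lemma cg_append_right (c : List (Gen m n)) {a b : List (Gen m n)} (h : cg m n a b) :
    cg m n (a ++ c) (b ++ c) := cg_append h (cg_refl c)
lemma cg_cons (g : Gen m n) {a b : List (Gen m n)} (h : cg m n a b) :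
    cg m n (g :: a) (g :: b) := cg_append_left [g] h

-- ## facts about the words and rotations

lemma not_isU_of_mem_wordT {g : Gen m n} (h : g ∈ wordT m n) : isU g = false := by
  rw [wordT, List.mem_cons] at h
  rcases h with rfl | h
  · rfl
  · rcases List.mem_ofFn.1 h with ⟨i, rfl⟩
    rfl

lemma not_isT_of_mem_wordU {g : Gen m n} (h : g ∈ wordU m n) : isT g = false := by
  rw [wordU, List.mem_cons] at h
  rcases h with rfl | h
  · rfl
  · rcases List.mem_ofFn.1 h with ⟨i, rfl⟩
    rfl

@[simp] lemma pT_rotT (p : ℕ) : pT ((wordT m n).rotate p) = (wordT m n).rotate p := by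
  apply List.filter_eq_self.2
  intro g hg
  simp [not_isU_of_mem_wordT (List.mem_rotate.1 hg)]

@[simp] lemma pU_rotU (p : ℕ) : pU ((wordU m n).rotate p) = (wordU m n).rotate p := by
  apply List.filter_eq_self.2
  intro g hg
  simp [not_isT_of_mem_wordU (List.mem_rotate.1 hg)]

@[simp] lemma pU_wordT : pU (wordT m n) = [Gen.s] := by
  show pU (Gen.s :: _) = _
  rw [pU_cons_s]
  congr 1
  apply List.filter_eq_nil_iff.2
  intro g hg
  rcases List.mem_ofFn.1 hg with ⟨i, rfl⟩
  simp

@[simp] lemma pT_wordU : pT (wordU m n) = [Gen.s] := by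
  show pT (Gen.s :: _) = _
  rw [pT_cons_s]
  congr 1
  apply List.filter_eq_nil_iff.2
  intro g hg
  rcases List.mem_ofFn.1 hg with ⟨i, rfl⟩
  simp

@[simp] lemma pU_rotT (p : ℕ) : pU ((wordT m n).rotate p) = [Gen.s] := by
  have h : List.Perm (pU ((wordT m n).rotate p)) (pU (wordT m n)) :=
    ((wordT m n).rotate_perm p).filter _
  rw [pU_wordT] at h
  exact List.perm_singleton.1 h

@[simp] lemma pT_rotU (p : ℕ) : pT ((wordU m n).rotate p) = [Gen.s] := by
  have h : List.Perm (pT ((wordU m n).rotate p)) (pT (wordU m n)) :=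
    ((wordU m n).rotate_perm p).filter _
  rw [pT_wordU] at h
  exact List.perm_singleton.1 h

-- ## counting s letters

def countS (l : List (Gen m n)) : ℕ := l.countP (fun g => isS g)

@[simp] lemma countS_nil : countS ([] : List (Gen m n)) = 0 := rfl
@[simp] lemma countS_append (a b : List (Gen m n)) : countS (a ++ b) = countS a + countS b :=
  List.countP_append ..
@[simp] lemma countS_cons_s (l : List (Gen m n)) : countS (Gen.s :: l) = countS l + 1 := by
  simp [countS, List.countP_cons]
@[simp] lemma countS_cons_t (i : Fin m) (l : List (Gen m n)) :
    countS (Gen.t i :: l) = countS l := by simp [countS, List.countP_cons]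
@[simp] lemma countS_cons_u (j : Fin n) (l : List (Gen m n)) :
    countS (Gen.u j :: l) = countS l := by simp [countS, List.countP_cons]

@[simp] lemma countS_pT (l : List (Gen m n)) : countS (pT l) = countS l := by
  induction l with
  | nil => rfl
  | cons g l ih => cases g <;> simp [ih]

@[simp] lemma countS_pU (l : List (Gen m n)) : countS (pU l) = countS l := by
  induction l with
  | nil => rfl
  | cons g l ih => cases g <;> simp [ih]

@[simp] lemma countS_wordT : countS (wordT m n) = 1 := by
  have : countS (pU (wordT m n)) = countS (wordT m n) := countS_pU _
  rw [pU_wordT] at this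
  simpa using this.symm

@[simp] lemma countS_wordU : countS (wordU m n) = 1 := by
  have : countS (pT (wordU m n)) = countS (wordU m n) := countS_pT _
  rw [pT_wordU] at this
  simpa using this.symm

lemma countS_perm {a b : List (Gen m n)} (h : List.Perm a b) : countS a = countS b :=
  h.countP_eq _

@[simp] lemma countS_rotate (l : List (Gen m n)) (p : ℕ) : countS (l.rotate p) = countS l :=
  countS_perm (l.rotate_perm p)

-- ## decomposition lemmas for filters

/-- If `filter f l = c :: r` then `l` splits as a bad prefix, `c`, and a tail. -/
lemma filter_eq_cons_split {α : Type*} {f : α → Bool} :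
    ∀ {l : List α} {c : α} {r : List α}, l.filter f = c :: r →
      ∃ μ l', l = μ ++ c :: l' ∧ (∀ x ∈ μ, f x = false) ∧ l'.filter f = r := by
  intro l
  induction l with
  | nil => intro c r h; simp at h
  | cons a l ih =>
    intro c r h
    by_cases hf : f a
    · rw [List.filter_cons_of_pos hf] at h
      obtain ⟨rfl, rfl⟩ : a = c ∧ l.filter f = r := ⟨(List.cons_eq_cons.1 h).1, (List.cons_eq_cons.1 h).2⟩
      exact ⟨[], l, rfl, by simp, rfl⟩
    · rw [List.filter_cons_of_neg hf] at h
      obtain ⟨μ, l', rfl, hμ, hl'⟩ := ih h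
      exact ⟨a :: μ, l', rfl, by
        intro x hx
        rcases List.mem_cons.1 hx with rfl | hx
        · exact Bool.eq_false_iff.2 hf
        · exact hμ x hx, hl'⟩

/-- If `filter f l = r₁ ++ r₂` then `l` splits accordingly. -/
lemma filter_eq_append_split {α : Type*} {f : α → Bool} :
    ∀ {l : List α} {r₁ r₂ : List α}, l.filter f = r₁ ++ r₂ →
      ∃ l₁ l₂, l = l₁ ++ l₂ ∧ l₁.filter f = r₁ ∧ l₂.filter f = r₂ := by
  intro l
  induction l with
  | nil =>
    intro r₁ r₂ h
    rw [List.filter_nil] at h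
    obtain ⟨h₁, h₂⟩ := List.append_eq_nil_iff.1 h.symm
    exact ⟨[], [], rfl, by simp [h₁], by simp [h₂]⟩
  | cons a l ih =>
    intro r₁ r₂ h
    by_cases hf : f a
    · rw [List.filter_cons_of_pos hf] at h
      cases r₁ with
      | nil =>
        exact ⟨[], a :: l, rfl, rfl, by rw [List.filter_cons_of_pos hf]; simpa using h⟩
      | cons c r₁' =>
        obtain ⟨hc, hl⟩ := List.cons_eq_cons.1 h
        obtain ⟨l₁, l₂, rfl, h₁, h₂⟩ := ih hl
        exact ⟨a :: l₁, l₂, rfl, by rw [List.filter_cons_of_pos hf, h₁, hc], h₂⟩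
    · rw [List.filter_cons_of_neg hf] at h
      obtain ⟨l₁, l₂, rfl, h₁, h₂⟩ := ih h
      exact ⟨a :: l₁, l₂, rfl, by rw [List.filter_cons_of_neg hf, h₁], h₂⟩

/-- Decompose a list with exactly one `f`-element. -/
lemma countP_eq_one_split {α : Type*} {f : α → Bool} :
    ∀ {l : List α}, l.countP f = 1 →
      ∃ l₀ c l₁, l = l₀ ++ c :: l₁ ∧ f c = true ∧ (∀ x ∈ l₀, f x = false) ∧
        (∀ x ∈ l₁, f x = false) := by
  intro l
  induction l with
  | nil => intro h; simp at h
  | cons a l ih =>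
    intro h
    rw [List.countP_cons] at h
    by_cases hf : f a
    · rw [if_pos hf] at h
      have hl : l.countP f = 0 := by omega
      refine ⟨[], a, l, rfl, hf, by simp, ?_⟩
      intro x hx
      exact Bool.eq_false_iff.2 fun hfx => by
        have := List.countP_eq_zero.1 hl x hx
        simp [hfx] at this
    · rw [if_neg hf] at h
      simp only [add_zero] at h
      obtain ⟨l₀, c, l₁, rfl, hc, h₀, h₁⟩ := ih h
      exact ⟨a :: l₀, c, l₁, rfl, hc, by
        intro x hx
        rcases List.mem_cons.1 hx with rfl | hx
        · exact Bool.eq_false_iff.2 hf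
        · exact h₀ x hx, h₁⟩

-- ## bubbling letters through commuting blocks

lemma cg_swap_ut (i : Fin m) (j : Fin n) (w : List (Gen m n)) :
    cg m n (Gen.u j :: Gen.t i :: w) (Gen.t i :: Gen.u j :: w) := by
  have base : ConGen.Rel (Rel m n)
      (FreeMonoid.ofList [Gen.u j, Gen.t i]) (FreeMonoid.ofList [Gen.t i, Gen.u j]) :=
    ConGen.Rel.symm (ConGen.Rel.of _ _ (Rel.comm i j))
  have := ConGen.Rel.mul base (ConGen.Rel.refl (FreeMonoid.ofList w))
  simpa [cg, FreeMonoid.ofList_append, mul_assoc] using this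

lemma cg_swap_tu (i : Fin m) (j : Fin n) (w : List (Gen m n)) :
    cg m n (Gen.t i :: Gen.u j :: w) (Gen.u j :: Gen.t i :: w) :=
  cg_symm (cg_swap_ut i j w)

/-- bubble a `t` to the front of an all-`u` block -/
lemma cg_bubble_t (i : Fin m) :
    ∀ (μ : List (Gen m n)), (∀ x ∈ μ, isU x = true) →
      ∀ w, cg m n (μ ++ Gen.t i :: w) (Gen.t i :: (μ ++ w)) := by
  intro μ
  induction μ with
  | nil => intro _ w; exact cg_refl _
  | cons a μ ih =>
    intro ha w
    have ha' : isU a = true := ha a List.mem_cons_self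
    obtain ⟨j, rfl⟩ : ∃ j, a = Gen.u j := by cases a <;> simp_all
    show cg m n (Gen.u j :: (μ ++ Gen.t i :: w)) (Gen.t i :: (Gen.u j :: (μ ++ w)))
    exact cg_trans
      (cg_cons (Gen.u j) (ih (fun x hx => ha x (List.mem_cons_of_mem _ hx)) w))
      (cg_swap_ut i j (μ ++ w))

/-- bubble a `u` to the front of an all-`t` block -/
lemma cg_bubble_u (j : Fin n) :
    ∀ (ν : List (Gen m n)), (∀ x ∈ ν, isT x = true) →
      ∀ w, cg m n (ν ++ Gen.u j :: w) (Gen.u j :: (ν ++ w)) := by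
  intro ν
  induction ν with
  | nil => intro _ w; exact cg_refl _
  | cons a ν ih =>
    intro ha w
    have ha' : isT a = true := ha a List.mem_cons_self
    obtain ⟨i, rfl⟩ : ∃ i, a = Gen.t i := by cases a <;> simp_all
    show cg m n (Gen.t i :: (ν ++ Gen.u j :: w)) (Gen.u j :: (Gen.t i :: (ν ++ w)))
    exact cg_trans
      (cg_cons (Gen.t i) (ih (fun x hx => ha x (List.mem_cons_of_mem _ hx)) w))
      (cg_swap_tu i j (ν ++ w))

lemma pT_eq_nil_allU {μ : List (Gen m n)} (h : ∀ x ∈ μ, isU x = true) : pT μ = [] :=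
  List.filter_eq_nil_iff.2 fun x hx => by simp [h x hx]

lemma pU_eq_self_allU {μ : List (Gen m n)} (h : ∀ x ∈ μ, isU x = true) : pU μ = μ :=
  List.filter_eq_self.2 fun x hx => by
    have hx' := h x hx
    cases x with
    | s => simp at hx'
    | t i => simp at hx'
    | u j => simp

lemma pU_eq_nil_allT {ν : List (Gen m n)} (h : ∀ x ∈ ν, isT x = true) : pU ν = [] :=
  List.filter_eq_nil_iff.2 fun x hx => by simp [h x hx]

lemma pT_eq_self_allT {ν : List (Gen m n)} (h : ∀ x ∈ ν, isT x = true) : pT ν = ν :=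
  List.filter_eq_self.2 fun x hx => by
    have hx' := h x hx
    cases x with
    | s => simp at hx'
    | t i => simp
    | u j => simp at hx'


/-- Words with the same two projections are congruent (using only the commutation relations). -/
lemma cg_of_proj_eq : ∀ (a b : List (Gen m n)), pT a = pT b → pU a = pU b → cg m n a b := by
  intro a
  induction a with
  | nil =>
    intro b hT hU
    cases b with
    | nil => exact cg_refl _
    | cons h b' => cases h <;> simp_all
  | cons g a' ih =>
    intro b hT hU
    cases g with
    | s =>
      cases b with
      | nil => simp_all
      | cons h b' =>
        cases h with
        | s =>
          simp only [pT_cons_s, pU_cons_s, List.cons.injEq, true_and] at hT hU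
          exact cg_cons _ (ih b' hT hU)
        | t k => simp_all
        | u k => simp_all
    | t k =>
      rw [pT_cons_t] at hT
      obtain ⟨μ, b', rfl, hμ, hb'⟩ := filter_eq_cons_split hT.symm
      have hμ' : ∀ x ∈ μ, isU x = true := fun x hx => by
        have := hμ x hx; simpa using this
      have hbub := cg_bubble_t k μ hμ' b'
      have hpTμ : pT μ = [] := pT_eq_nil_allU hμ'
      have hpUμ : pU μ = μ := pU_eq_self_allU hμ'
      have h1 : pT a' = pT (μ ++ b') := by
        rw [pT_append, hpTμ, List.nil_append]
        exact hb'.symm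
      have h2 : pU a' = pU (μ ++ b') := by
        rw [pU_cons_t] at hU
        rw [pU_append, hpUμ]
        rw [hU, pU_append, hpUμ, pU_cons_t]
      exact cg_trans (cg_cons (Gen.t k) (ih (μ ++ b') h1 h2)) (cg_symm hbub)
    | u k =>
      rw [pU_cons_u] at hU
      obtain ⟨ν, b', rfl, hν, hb'⟩ := filter_eq_cons_split hU.symm
      have hν' : ∀ x ∈ ν, isT x = true := fun x hx => by
        have := hν x hx; simpa using this
      have hbub := cg_bubble_u k ν hν' b'
      have hpUν : pU ν = [] := pU_eq_nil_allT hν'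
      have hpTν : pT ν = ν := pT_eq_self_allT hν'
      have h2 : pU a' = pU (ν ++ b') := by
        rw [pU_append, hpUν, List.nil_append]
        exact hb'.symm
      have h1 : pT a' = pT (ν ++ b') := by
        rw [pT_cons_u] at hT
        rw [pT_append, hpTν]
        rw [hT, pT_append, hpTν, pT_cons_u]
      exact cg_trans (cg_cons (Gen.u k) (ih (ν ++ b') h1 h2)) (cg_symm hbub)

-- ## the rotation step lemma

lemma stepT (p q : ℕ) (a : List (Gen m n)) (ha : pT a = (wordT m n).rotate p) :
    ∃ b, cg m n a b ∧ pT b = (wordT m n).rotate q ∧ pU b = pU a := by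
  have hc : (pU a).countP (fun g => isS g) = 1 := by
    have : countS (pU a) = 1 := by
      rw [countS_pU]
      have := countS_pT (m := m) (n := n) a
      rw [ha] at this
      simpa using this.symm
    exact this
  obtain ⟨β₀, c, β₁, hdec, hcS, h0, h1⟩ := countP_eq_one_split hc
  obtain rfl : c = Gen.s := by cases c <;> simp_all
  have hmem : ∀ x ∈ β₀ ++ Gen.s :: β₁, isT x = false := by
    intro x hx
    rw [← hdec] at hx
    have := List.of_mem_filter hx
    simpa using this
  have key : ∀ x : Gen m n, isT x = false → isS x = false → isU x = true := by
    intro x h1' h2'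
    cases x with
    | s => simp at h2'
    | t i => simp at h1'
    | u j => rfl
  have hU0 : ∀ x ∈ β₀, isU x = true := fun x hx =>
    key x (hmem x (List.mem_append_left _ hx)) (h0 x hx)
  have hU1 : ∀ x ∈ β₁, isU x = true := fun x hx =>
    key x (hmem x (List.mem_append_right _ (List.mem_cons_of_mem _ hx))) (h1 x hx)
  refine ⟨β₀ ++ ((wordT m n).rotate q ++ β₁), ?_, ?_, ?_⟩
  · have haa' : cg m n a (β₀ ++ ((wordT m n).rotate p ++ β₁)) := by
      apply cg_of_proj_eq
      · rw [ha, pT_append, pT_append, pT_eq_nil_allU hU0, pT_eq_nil_allU hU1,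
          pT_rotT, List.nil_append, List.append_nil]
      · rw [hdec, pU_append, pU_append, pU_eq_self_allU hU0, pU_eq_self_allU hU1,
          pU_rotT]
        rfl
    have hrot : cg m n ((wordT m n).rotate p) ((wordT m n).rotate q) :=
      cg_trans (cg_symm (ConGen.Rel.of _ _ (Rel.rotT p))) (ConGen.Rel.of _ _ (Rel.rotT q))
    exact cg_trans haa' (cg_append_left β₀ (cg_append_right β₁ hrot))
  · rw [pT_append, pT_append, pT_eq_nil_allU hU0, pT_eq_nil_allU hU1,
      pT_rotT, List.nil_append, List.append_nil]
  · rw [hdec, pU_append, pU_append, pU_eq_self_allU hU0, pU_eq_self_allU hU1, pU_rotT]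
    rfl

lemma stepU (p q : ℕ) (a : List (Gen m n)) (ha : pU a = (wordU m n).rotate p) :
    ∃ b, cg m n a b ∧ pU b = (wordU m n).rotate q ∧ pT b = pT a := by
  have hc : (pT a).countP (fun g => isS g) = 1 := by
    have : countS (pT a) = 1 := by
      rw [countS_pT]
      have := countS_pU (m := m) (n := n) a
      rw [ha] at this
      simpa using this.symm
    exact this
  obtain ⟨γ₀, c, γ₁, hdec, hcS, h0, h1⟩ := countP_eq_one_split hc
  obtain rfl : c = Gen.s := by cases c <;> simp_all
  have hmem : ∀ x ∈ γ₀ ++ Gen.s :: γ₁, isU x = false := by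
    intro x hx
    rw [← hdec] at hx
    have := List.of_mem_filter hx
    simpa using this
  have key : ∀ x : Gen m n, isU x = false → isS x = false → isT x = true := by
    intro x h1' h2'
    cases x with
    | s => simp at h2'
    | t i => rfl
    | u j => simp at h1'
  have hT0 : ∀ x ∈ γ₀, isT x = true := fun x hx =>
    key x (hmem x (List.mem_append_left _ hx)) (h0 x hx)
  have hT1 : ∀ x ∈ γ₁, isT x = true := fun x hx =>
    key x (hmem x (List.mem_append_right _ (List.mem_cons_of_mem _ hx))) (h1 x hx)
  refine ⟨γ₀ ++ ((wordU m n).rotate q ++ γ₁), ?_, ?_, ?_⟩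
  · have haa' : cg m n a (γ₀ ++ ((wordU m n).rotate p ++ γ₁)) := by
      apply cg_of_proj_eq
      · rw [hdec, pT_append, pT_append, pT_eq_self_allT hT0, pT_eq_self_allT hT1,
          pT_rotU]
        rfl
      · rw [ha, pU_append, pU_append, pU_eq_nil_allT hT0, pU_eq_nil_allT hT1,
          pU_rotU, List.nil_append, List.append_nil]
    have hrot : cg m n ((wordU m n).rotate p) ((wordU m n).rotate q) :=
      cg_trans (cg_symm (ConGen.Rel.of _ _ (Rel.rotU p))) (ConGen.Rel.of _ _ (Rel.rotU q))
    exact cg_trans haa' (cg_append_left γ₀ (cg_append_right γ₁ hrot))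
  · rw [pU_append, pU_append, pU_eq_nil_allT hT0, pU_eq_nil_allT hT1,
      pU_rotU, List.nil_append, List.append_nil]
  · rw [hdec, pT_append, pT_append, pT_eq_self_allT hT0, pT_eq_self_allT hT1, pT_rotU]
    rfl

-- ## lifting rotation-only congruences

lemma liftT_aux {x y : FreeMonoid (Gen m n)} (h : ConGen.Rel (RT m n) x y) :
    (∀ a : List (Gen m n), pT a = FreeMonoid.toList x →
      ∃ b, cg m n a b ∧ pT b = FreeMonoid.toList y ∧ pU b = pU a) ∧
    (∀ a : List (Gen m n), pT a = FreeMonoid.toList y →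
      ∃ b, cg m n a b ∧ pT b = FreeMonoid.toList x ∧ pU b = pU a) := by
  induction h with
  | of x y hxy =>
    obtain ⟨j, rfl, rfl⟩ := hxy
    constructor
    · intro a ha
      exact stepT 0 j a (by rw [List.rotate_zero]; exact ha)
    · intro a ha
      obtain ⟨b, h1, h2, h3⟩ := stepT j 0 a ha
      exact ⟨b, h1, by rw [h2, List.rotate_zero, FreeMonoid.toList_ofList], h3⟩
  | refl x => exact ⟨fun a ha => ⟨a, cg_refl a, ha, rfl⟩, fun a ha => ⟨a, cg_refl a, ha, rfl⟩⟩
  | symm _ ih => exact ⟨ih.2, ih.1⟩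
  | trans _ _ ih₁ ih₂ =>
    constructor
    · intro a ha
      obtain ⟨b, h1, h2, h3⟩ := ih₁.1 a ha
      obtain ⟨c, h4, h5, h6⟩ := ih₂.1 b h2
      exact ⟨c, cg_trans h1 h4, h5, by rw [h6, h3]⟩
    · intro a ha
      obtain ⟨b, h1, h2, h3⟩ := ih₂.2 a ha
      obtain ⟨c, h4, h5, h6⟩ := ih₁.2 b h2
      exact ⟨c, cg_trans h1 h4, h5, by rw [h6, h3]⟩
  | mul _ _ ih₁ ih₂ =>
    constructor
    · intro a ha
      obtain ⟨a₁, a₂, rfl, h₁, h₂⟩ := filter_eq_append_split ha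
      obtain ⟨b₁, hb₁, hTb₁, hUb₁⟩ := ih₁.1 a₁ h₁
      obtain ⟨b₂, hb₂, hTb₂, hUb₂⟩ := ih₂.1 a₂ h₂
      exact ⟨b₁ ++ b₂, cg_append hb₁ hb₂,
        by rw [pT_append, hTb₁, hTb₂]; rfl,
        by rw [pU_append, pU_append, hUb₁, hUb₂]⟩
    · intro a ha
      obtain ⟨a₁, a₂, rfl, h₁, h₂⟩ := filter_eq_append_split ha
      obtain ⟨b₁, hb₁, hTb₁, hUb₁⟩ := ih₁.2 a₁ h₁
      obtain ⟨b₂, hb₂, hTb₂, hUb₂⟩ := ih₂.2 a₂ h₂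
      exact ⟨b₁ ++ b₂, cg_append hb₁ hb₂,
        by rw [pT_append, hTb₁, hTb₂]; rfl,
        by rw [pU_append, pU_append, hUb₁, hUb₂]⟩

lemma liftU_aux {x y : FreeMonoid (Gen m n)} (h : ConGen.Rel (RU m n) x y) :
    (∀ a : List (Gen m n), pU a = FreeMonoid.toList x →
      ∃ b, cg m n a b ∧ pU b = FreeMonoid.toList y ∧ pT b = pT a) ∧
    (∀ a : List (Gen m n), pU a = FreeMonoid.toList y →
      ∃ b, cg m n a b ∧ pU b = FreeMonoid.toList x ∧ pT b = pT a) := by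
  induction h with
  | of x y hxy =>
    obtain ⟨j, rfl, rfl⟩ := hxy
    constructor
    · intro a ha
      exact stepU 0 j a (by rw [List.rotate_zero]; exact ha)
    · intro a ha
      obtain ⟨b, h1, h2, h3⟩ := stepU j 0 a ha
      exact ⟨b, h1, by rw [h2, List.rotate_zero, FreeMonoid.toList_ofList], h3⟩
  | refl x => exact ⟨fun a ha => ⟨a, cg_refl a, ha, rfl⟩, fun a ha => ⟨a, cg_refl a, ha, rfl⟩⟩
  | symm _ ih => exact ⟨ih.2, ih.1⟩
  | trans _ _ ih₁ ih₂ =>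
    constructor
    · intro a ha
      obtain ⟨b, h1, h2, h3⟩ := ih₁.1 a ha
      obtain ⟨c, h4, h5, h6⟩ := ih₂.1 b h2
      exact ⟨c, cg_trans h1 h4, h5, by rw [h6, h3]⟩
    · intro a ha
      obtain ⟨b, h1, h2, h3⟩ := ih₂.2 a ha
      obtain ⟨c, h4, h5, h6⟩ := ih₁.2 b h2
      exact ⟨c, cg_trans h1 h4, h5, by rw [h6, h3]⟩
  | mul _ _ ih₁ ih₂ =>
    constructor
    · intro a ha
      obtain ⟨a₁, a₂, rfl, h₁, h₂⟩ := filter_eq_append_split ha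
      obtain ⟨b₁, hb₁, hUb₁, hTb₁⟩ := ih₁.1 a₁ h₁
      obtain ⟨b₂, hb₂, hUb₂, hTb₂⟩ := ih₂.1 a₂ h₂
      exact ⟨b₁ ++ b₂, cg_append hb₁ hb₂,
        by rw [pU_append, hUb₁, hUb₂]; rfl,
        by rw [pT_append, pT_append, hTb₁, hTb₂]⟩
    · intro a ha
      obtain ⟨a₁, a₂, rfl, h₁, h₂⟩ := filter_eq_append_split ha
      obtain ⟨b₁, hb₁, hUb₁, hTb₁⟩ := ih₁.2 a₁ h₁
      obtain ⟨b₂, hb₂, hUb₂, hTb₂⟩ := ih₂.2 a₂ h₂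
      exact ⟨b₁ ++ b₂, cg_append hb₁ hb₂,
        by rw [pU_append, hUb₁, hUb₂]; rfl,
        by rw [pT_append, pT_append, hTb₁, hTb₂]⟩

/-- The key lemma: congruence of both projections implies congruence. -/
lemma cg_of_proj_cg (a b : List (Gen m n)) (hT : cgT m n (pT a) (pT b))
    (hU : cgU m n (pU a) (pU b)) : cg m n a b := by
  obtain ⟨c, hac, hcT, hcU⟩ := (liftT_aux hT).1 a rfl
  obtain ⟨d, hcd, hdU, hdT⟩ := (liftU_aux hU).1 c hcU
  refine cg_trans hac (cg_trans hcd (cg_of_proj_eq d b ?_ ?_))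
  · rw [hdT, hcT, FreeMonoid.toList_ofList]
  · rw [hdU, FreeMonoid.toList_ofList]

@[simp] lemma pT_wordT : pT (wordT m n) = wordT m n := by
  have := pT_rotT (m := m) (n := n) 0
  rwa [List.rotate_zero] at this

@[simp] lemma pU_wordU : pU (wordU m n) = wordU m n := by
  have := pU_rotU (m := m) (n := n) 0
  rwa [List.rotate_zero] at this

/-- The `t,s`-projection of the full congruence lands in the rotation-only congruence. -/
lemma cg_pT {x y : FreeMonoid (Gen m n)} (h : ConGen.Rel (Rel m n) x y) :
    cgT m n (pT (FreeMonoid.toList x)) (pT (FreeMonoid.toList y)) := by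
  induction h with
  | of x y hxy =>
    cases hxy with
    | rotT j =>
      rw [FreeMonoid.toList_ofList, FreeMonoid.toList_ofList, pT_wordT, pT_rotT]
      exact ConGen.Rel.of _ _ ⟨j, rfl, rfl⟩
    | rotU j =>
      rw [FreeMonoid.toList_ofList, FreeMonoid.toList_ofList, pT_wordU, pT_rotU]
      exact ConGen.Rel.refl _
    | comm i j =>
      show cgT m n (pT [Gen.t i, Gen.u j]) (pT [Gen.u j, Gen.t i])
      simp only [pT_cons_t, pT_cons_u]
      exact ConGen.Rel.refl _
  | refl x => exact ConGen.Rel.refl _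
  | symm _ ih => exact ConGen.Rel.symm ih
  | trans _ _ ih₁ ih₂ => exact ConGen.Rel.trans ih₁ ih₂
  | mul _ _ ih₁ ih₂ =>
    have := ConGen.Rel.mul ih₁ ih₂
    simp only [FreeMonoid.toList_mul, pT_append]
    simpa [cgT, FreeMonoid.ofList_append] using this

/-- The `u,s`-projection of the full congruence lands in the rotation-only congruence. -/
lemma cg_pU {x y : FreeMonoid (Gen m n)} (h : ConGen.Rel (Rel m n) x y) :
    cgU m n (pU (FreeMonoid.toList x)) (pU (FreeMonoid.toList y)) := by
  induction h with
  | of x y hxy =>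
    cases hxy with
    | rotT j =>
      rw [FreeMonoid.toList_ofList, FreeMonoid.toList_ofList, pU_wordT, pU_rotT]
      exact ConGen.Rel.refl _
    | rotU j =>
      rw [FreeMonoid.toList_ofList, FreeMonoid.toList_ofList, pU_wordU, pU_rotU]
      exact ConGen.Rel.of _ _ ⟨j, rfl, rfl⟩
    | comm i j =>
      show cgU m n (pU [Gen.t i, Gen.u j]) (pU [Gen.u j, Gen.t i])
      simp only [pU_cons_t, pU_cons_u]
      exact ConGen.Rel.refl _
  | refl x => exact ConGen.Rel.refl _
  | symm _ ih => exact ConGen.Rel.symm ih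
  | trans _ _ ih₁ ih₂ => exact ConGen.Rel.trans ih₁ ih₂
  | mul _ _ ih₁ ih₂ =>
    have := ConGen.Rel.mul ih₁ ih₂
    simp only [FreeMonoid.toList_mul, pU_append]
    simpa [cgU, FreeMonoid.ofList_append] using this

/-- The number of `s` letters is invariant under the congruence. -/
lemma countS_cg {x y : FreeMonoid (Gen m n)} (h : ConGen.Rel (Rel m n) x y) :
    countS (FreeMonoid.toList x) = countS (FreeMonoid.toList y) := by
  induction h with
  | of x y hxy =>
    cases hxy with
    | rotT j => simp
    | rotU j => simp
    | comm i j => rfl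
  | refl x => rfl
  | symm _ ih => exact ih.symm
  | trans _ _ ih₁ ih₂ => exact ih₁.trans ih₂
  | mul _ _ ih₁ ih₂ => simp only [FreeMonoid.toList_mul, countS_append, ih₁, ih₂]

-- ## merging two words with matching s-counts

lemma isU_true_of {x : Gen m n} (h1 : isT x = false) (h2 : isS x = false) : isU x = true := by
  cases x with
  | s => simp at h2
  | t i => simp at h1
  | u j => rfl

/-- split a list at its first `s` -/
lemma sSplit : ∀ (β : List (Gen m n)), 0 < countS β →
    β = β.takeWhile (fun g => !isS g) ++ Gen.s :: (β.dropWhile (fun g => !isS g)).tail ∧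
    (∀ x ∈ β.takeWhile (fun g => !isS g), isS x = false) ∧
    countS (β.takeWhile (fun g => !isS g)) = 0 ∧
    countS ((β.dropWhile (fun g => !isS g)).tail) = countS β - 1 := by
  intro β
  induction β with
  | nil => intro h; simp at h
  | cons a β ih =>
    intro h
    by_cases ha : isS a = true
    · obtain rfl : a = Gen.s := by
        cases a with
        | s => rfl
        | t i => simp at ha
        | u j => simp at ha
      have h1 : (Gen.s :: β).takeWhile (fun g : Gen m n => !isS g) = [] := by
        rw [List.takeWhile_cons_of_neg] <;> simp
      have h2 : (Gen.s :: β).dropWhile (fun g : Gen m n => !isS g) = Gen.s :: β := by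
        rw [List.dropWhile_cons_of_neg] <;> simp
      rw [h1, h2]
      refine ⟨by simp, by simp, by simp [countS], by simp⟩
    · have ha' : isS a = false := Bool.eq_false_iff.2 ha
      have hca : countS (a :: β) = countS β := by
        cases a with
        | s => simp at ha'
        | t i => simp
        | u j => simp
      have hβ : 0 < countS β := by rw [hca] at h; exact h
      obtain ⟨e1, e2, e3, e4⟩ := ih hβ
      have h1 : (a :: β).takeWhile (fun g : Gen m n => !isS g) =
          a :: β.takeWhile (fun g : Gen m n => !isS g) := by
        rw [List.takeWhile_cons_of_pos]; simp [ha']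
      have h2 : (a :: β).dropWhile (fun g : Gen m n => !isS g) =
          β.dropWhile (fun g : Gen m n => !isS g) := by
        rw [List.dropWhile_cons_of_pos]; simp [ha']
      rw [h1, h2]
      refine ⟨by rw [List.cons_append]; exact congrArg (a :: ·) e1, ?_, ?_, ?_⟩
      · intro x hx
        rcases List.mem_cons.1 hx with rfl | hx
        · exact ha'
        · exact e2 x hx
      · rw [show countS (a :: β.takeWhile (fun g : Gen m n => !isS g)) =
            countS (β.takeWhile (fun g : Gen m n => !isS g)) by
            cases a with
            | s => simp at ha'
            | t i => simp
            | u j => simp]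
        exact e3
      · rw [e4, hca]

def merge : List (Gen m n) → List (Gen m n) → List (Gen m n)
  | [], β => β
  | Gen.s :: α, β =>
      β.takeWhile (fun g => !isS g) ++
        Gen.s :: merge α ((β.dropWhile (fun g => !isS g)).tail)
  | Gen.t i :: α, β => Gen.t i :: merge α β
  | Gen.u j :: α, β => Gen.u j :: merge α β

lemma merge_proj : ∀ (α β : List (Gen m n)), (∀ x ∈ α, isU x = false) →
    (∀ x ∈ β, isT x = false) → countS α = countS β →
    pT (merge α β) = α ∧ pU (merge α β) = β := by
  intro α
  induction α with
  | nil =>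
    intro β _ hβ hc
    have hc' : countS β = 0 := by simpa using hc.symm
    have hall : ∀ x ∈ β, isU x = true := fun x hx =>
      isU_true_of (hβ x hx) (by
        have := List.countP_eq_zero.1 hc' x hx
        simpa using this)
    exact ⟨pT_eq_nil_allU hall, pU_eq_self_allU hall⟩
  | cons g α ih =>
    intro β hα hβ hc
    cases g with
    | s =>
      have hpos : 0 < countS β := by
        rw [← hc]; simp
      obtain ⟨e1, e2, e3, e4⟩ := sSplit β hpos
      set tw := β.takeWhile (fun g : Gen m n => !isS g) with htw
      set rest := (β.dropWhile (fun g : Gen m n => !isS g)).tail with hrest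
      have htwU : ∀ x ∈ tw, isU x = true := fun x hx =>
        isU_true_of (hβ x (by rw [e1]; exact List.mem_append_left _ hx)) (e2 x hx)
      have hrestT : ∀ x ∈ rest, isT x = false := fun x hx =>
        hβ x (by rw [e1]; exact List.mem_append_right _ (List.mem_cons_of_mem _ hx))
      have hcrest : countS α = countS rest := by
        rw [e4, ← hc]
        simp
      obtain ⟨ihT, ihU⟩ := ih rest (fun x hx => hα x (List.mem_cons_of_mem _ hx)) hrestT hcrest
      constructor
      · show pT (tw ++ Gen.s :: merge α rest) = Gen.s :: α
        rw [pT_append, pT_eq_nil_allU htwU, pT_cons_s, ihT, List.nil_append]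
      · show pU (tw ++ Gen.s :: merge α rest) = β
        rw [pU_append, pU_eq_self_allU htwU, pU_cons_s, ihU, ← e1]
    | t i =>
      obtain ⟨ihT, ihU⟩ := ih β (fun x hx => hα x (List.mem_cons_of_mem _ hx)) hβ
        (by rw [← hc]; simp)
      constructor
      · show pT (Gen.t i :: merge α β) = Gen.t i :: α
        rw [pT_cons_t, ihT]
      · show pU (Gen.t i :: merge α β) = β
        rw [pU_cons_t, ihU]
    | u j =>
      exact absurd (hα (Gen.u j) List.mem_cons_self) (by simp)

-- ## conversions between congruence and equality in the presented monoid

lemma mk_eq_mk_of_cg {a b : List (Gen m n)} (h : cg m n a b) :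
    PresentedMonoid.mk (Rel m n) (FreeMonoid.ofList a) =
      PresentedMonoid.mk (Rel m n) (FreeMonoid.ofList b) :=
  Quotient.sound h

lemma cg_of_mk_eq_mk {a b : FreeMonoid (Gen m n)}
    (h : PresentedMonoid.mk (Rel m n) a = PresentedMonoid.mk (Rel m n) b) :
    ConGen.Rel (Rel m n) a b :=
  Quotient.exact h

theorem t_mul_eq_u_mul' (m n : ℕ) :
    ∀ (i : Fin m) (j : Fin n) (X Y : GP m n),
      gen (Gen.t i) * X = gen (Gen.u j) * Y →
      ∃ Z : GP m n, X = gen (Gen.u j) * Z ∧ Y = gen (Gen.t i) * Z := by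
  intro i j X Y h
  obtain ⟨x, rfl⟩ := PresentedMonoid.surjective_mk (rels := Rel m n) X
  obtain ⟨y, rfl⟩ := PresentedMonoid.surjective_mk (rels := Rel m n) Y
  have h' : ConGen.Rel (Rel m n) (FreeMonoid.of (Gen.t i) * x) (FreeMonoid.of (Gen.u j) * y) := by
    apply cg_of_mk_eq_mk
    rw [map_mul, map_mul]
    exact h
  set lx := FreeMonoid.toList x with hlx
  set ly := FreeMonoid.toList y with hly
  have HT : cgT m n (Gen.t i :: pT lx) (pT ly) := by
    have := cg_pT h'
    simpa using this
  have HU : cgU m n (pU lx) (Gen.u j :: pU ly) := by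
    have := cg_pU h'
    simpa using this
  have hcount : countS lx = countS ly := by
    have := countS_cg h'
    simpa using this
  -- build the common word z
  have hαU : ∀ g ∈ pT lx, isU g = false := by
    intro g hg
    have := List.of_mem_filter hg
    simpa using this
  have hβT : ∀ g ∈ pU ly, isT g = false := by
    intro g hg
    have := List.of_mem_filter hg
    simpa using this
  have hcc : countS (pT lx) = countS (pU ly) := by
    rw [countS_pT, countS_pU]; exact hcount
  obtain ⟨hTz, hUz⟩ := merge_proj (pT lx) (pU ly) hαU hβT hcc
  set z := merge (pT lx) (pU ly) with hz
  refine ⟨PresentedMonoid.mk (Rel m n) (FreeMonoid.ofList z), ?_, ?_⟩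
  · have hcg : cg m n lx (Gen.u j :: z) := by
      apply cg_of_proj_cg
      · rw [pT_cons_u, hTz]
        exact ConGen.Rel.refl _
      · rw [pU_cons_u, hUz]
        exact HU
    have := mk_eq_mk_of_cg hcg
    calc PresentedMonoid.mk (Rel m n) x
        = PresentedMonoid.mk (Rel m n) (FreeMonoid.ofList lx) := rfl
      _ = PresentedMonoid.mk (Rel m n) (FreeMonoid.ofList (Gen.u j :: z)) := this
      _ = gen (Gen.u j) * PresentedMonoid.mk (Rel m n) (FreeMonoid.ofList z) := by
          rw [FreeMonoid.ofList_cons, map_mul]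
          rfl
  · have hcg : cg m n ly (Gen.t i :: z) := by
      apply cg_of_proj_cg
      · rw [pT_cons_t, hTz]
        exact ConGen.Rel.symm HT
      · rw [pU_cons_t, hUz]
        exact ConGen.Rel.refl _
    have := mk_eq_mk_of_cg hcg
    calc PresentedMonoid.mk (Rel m n) y
        = PresentedMonoid.mk (Rel m n) (FreeMonoid.ofList ly) := rfl
      _ = PresentedMonoid.mk (Rel m n) (FreeMonoid.ofList (Gen.t i :: z)) := this
      _ = gen (Gen.t i) * PresentedMonoid.mk (Rel m n) (FreeMonoid.ofList z) := by
          rw [FreeMonoid.ofList_cons, map_mul]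
          rfl

/-- For all `m, n ≥ 1` and all `i, j`, if `t_i·X = u_j·Y` in `G⁺_{m,n}` then there exists `Z`
with `X = u_j·Z` and `Y = t_i·Z`. -/
theorem t_mul_eq_u_mul (m n : ℕ) (hm : 1 ≤ m) (hn : 1 ≤ n) :
    ∀ (i : Fin m) (j : Fin n) (X Y : GP m n),
      gen (Gen.t i) * X = gen (Gen.u j) * Y →
      ∃ Z : GP m n, X = gen (Gen.u j) * Z ∧ Y = gen (Gen.t i) * Z := by
  intro i j X Y h
  exact t_mul_eq_u_mul' m n i j X Y h

end Gmn
end
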